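/- arXiv:1309.7421 — 5 statements merged into one kernel-verified Lean document; each statement's English description precedes it below -/
import Mathlib

section
/- Uniqueness for the inverse radiative coefficient problem (Theorem 2.5, in comparable pairs): Let δ > 0 and G_δ = (−δ, l+δ). Assume a ∈ W^{4,∞}(G_δ) with a ≥ 0 on G_δ, a(0) = a(l) = 0, a(x) > 0 on (0,l); assume φ ∈ W^{5,∞}(G_δ) with φ ≥ 0 and φ ≢ 0 on (0,l). Let q₁, q₂ ∈ W^{3,∞}(G_δ) with q₁ ≥ 0 and q₂ ≥ 0, and suppose either q₁(x) ≥ q₂(x) for all x ∈ G_δ or q₁(x) ≤ q₂(x) for all x ∈ G_δ. For i = 1,2 let u_i ∈ W^{3,∞}(Q̄) be the solution of the degenerate problem (u_i)_t − (a(x)(u_i)_x)_x + q_i(x)u_i = 0 on Q with u_i(x,0) = φ(x) on (0,l). If u₁(x,T) = u₂(x,T) for all x ∈ [0,l], then q₁ = q₂ on [0,l] and u₁ = u₂ on Q̄. -/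
open Set
open Filter

/-- At a right-endpoint maximum, the one-sided derivative is nonnegative. -/
lemma aux_deriv_nonneg_right_max {g : ℝ → ℝ} {c t1 t0 : ℝ} (h01 : t1 < t0)
    (hg : HasDerivWithinAt g c (Icc t1 t0) t0)
    (hmax : ∀ t ∈ Icc t1 t0, g t ≤ g t0) : 0 ≤ c := by
  rw [hasDerivWithinAt_iff_tendsto_slope] at hg
  have hne : (nhdsWithin t0 (Icc t1 t0 \ {t0})).NeBot := by
    rw [← mem_closure_iff_nhdsWithin_neBot]
    have hsub : Ico t1 t0 ⊆ Icc t1 t0 \ {t0} := by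
      intro x hx; exact ⟨⟨hx.1, hx.2.le⟩, ne_of_lt hx.2⟩
    refine closure_mono hsub ?_
    rw [closure_Ico (ne_of_lt h01)]
    exact ⟨le_of_lt h01, le_refl _⟩
  refine ge_of_tendsto hg ?_
  filter_upwards [self_mem_nhdsWithin] with t ht
  rcases ht with ⟨⟨ht1, ht2⟩, htne⟩
  have htlt : t < t0 := lt_of_le_of_ne ht2 (by simpa using htne)
  have heq : slope g t0 t = (g t0 - g t) / (t0 - t) := by
    rw [slope_def_field, ← neg_div_neg_eq]; ring_nf
  rw [heq]
  apply div_nonneg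
  · linarith [hmax t ⟨ht1, ht2⟩]
  · linarith

/-- At a right-endpoint minimum, the one-sided derivative is nonpositive. -/
lemma aux_deriv_nonpos_right_min {g : ℝ → ℝ} {c t1 t0 : ℝ} (h01 : t1 < t0)
    (hg : HasDerivWithinAt g c (Icc t1 t0) t0)
    (hmin : ∀ t ∈ Icc t1 t0, g t0 ≤ g t) : c ≤ 0 := by
  have h := aux_deriv_nonneg_right_max h01 hg.neg (fun t ht => by simpa using hmin t ht)
  linarith

/-- At an interior maximum the derivative vanishes. -/
lemma aux_interior_max_deriv_zero {f : ℝ → ℝ} {p q x0 c : ℝ} (hx : x0 ∈ Ioo p q)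
    (hf : HasDerivWithinAt f c (Icc p q) x0)
    (hmax : ∀ x ∈ Icc p q, f x ≤ f x0) : c = 0 := by
  have hmem : Icc p q ∈ nhds x0 := Icc_mem_nhds hx.1 hx.2
  have hda : HasDerivAt f c x0 := hf.hasDerivAt hmem
  have hlm : IsLocalMax f x0 := by
    filter_upwards [hmem] with x hx using hmax x hx
  exact hlm.hasDerivAt_eq_zero hda

/-- At an interior maximum the second derivative is nonpositive. -/
lemma aux_interior_max_deriv2_nonpos {f f' : ℝ → ℝ} {p q x0 c : ℝ}
    (hx : x0 ∈ Ioo p q)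
    (hf : ∀ x ∈ Icc p q, HasDerivWithinAt f (f' x) (Icc p q) x)
    (hf' : HasDerivWithinAt f' c (Icc p q) x0)
    (hmax : ∀ x ∈ Icc p q, f x ≤ f x0) : c ≤ 0 := by
  by_contra hc
  push_neg at hc
  have h0 : f' x0 = 0 := aux_interior_max_deriv_zero hx (hf x0 ⟨hx.1.le, hx.2.le⟩) hmax
  have hmem : Icc p q ∈ nhds x0 := Icc_mem_nhds hx.1 hx.2
  have hda : HasDerivAt f' c x0 := hf'.hasDerivAt hmem
  have hslope : Tendsto (slope f' x0) (nhdsWithin x0 ({x0}ᶜ)) (nhds c) :=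
    hasDerivAt_iff_tendsto_slope.1 hda
  have hslope' : Tendsto (slope f' x0) (nhdsWithin x0 (Ioi x0)) (nhds c) :=
    hslope.mono_left (nhdsWithin_mono _ (fun x hx => ne_of_gt hx))
  have hev : ∀ᶠ t in nhdsWithin x0 (Ioi x0), 0 < slope f' x0 t :=
    hslope'.eventually (lt_mem_nhds hc)
  rw [eventually_iff, mem_nhdsGT_iff_exists_Ioo_subset] at hev
  obtain ⟨u, hu, hIoo⟩ := hev
  set b := min u q with hb
  have hx0b : x0 < b := lt_min hu hx.2
  have hposf' : ∀ t ∈ Ioo x0 b, 0 < f' t := by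
    intro t ht
    have h1 : 0 < slope f' x0 t := hIoo ⟨ht.1, lt_of_lt_of_le ht.2 (min_le_left _ _)⟩
    rw [slope_def_field, h0, sub_zero] at h1
    have h2 := mul_pos h1 (sub_pos.2 ht.1)
    rwa [div_mul_cancel₀ _ (ne_of_gt (sub_pos.2 ht.1))] at h2
  set b' := (x0 + b) / 2 with hb'
  have hb'1 : x0 < b' := by simp only [hb']; linarith
  have hb'2 : b' < b := by simp only [hb']; linarith
  have hsub : Icc x0 b' ⊆ Icc p q := fun x hx' =>
    ⟨le_trans hx.1.le hx'.1, le_trans hx'.2 (le_trans hb'2.le (min_le_right _ _))⟩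
  have hcont : ContinuousOn f (Icc x0 b') := fun x hx' =>
    ((hf x (hsub hx')).continuousWithinAt).mono hsub
  have hmono : StrictMonoOn f (Icc x0 b') := by
    apply strictMonoOn_of_deriv_pos (convex_Icc _ _) hcont
    intro x hx'
    rw [interior_Icc] at hx'
    have hxIoo : x ∈ Ioo p q :=
      ⟨lt_of_le_of_lt hx.1.le hx'.1,
        lt_of_lt_of_le hx'.2 (le_trans hb'2.le (min_le_right _ _))⟩
    have hdx : HasDerivAt f (f' x) x :=
      (hf x ⟨hxIoo.1.le, hxIoo.2.le⟩).hasDerivAt (Icc_mem_nhds hxIoo.1 hxIoo.2)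
    rw [hdx.deriv]
    exact hposf' x ⟨hx'.1, lt_of_lt_of_le hx'.2 hb'2.le⟩
  have hlt : f x0 < f b' := hmono ⟨le_refl _, hb'1.le⟩ ⟨hb'1.le, le_refl _⟩ hb'1
  exact absurd (hmax b' (hsub ⟨hb'1.le, le_refl _⟩)) (not_le.2 hlt)

/-- Continuous on Icc, nonneg on Ioo ⇒ nonneg on Icc. -/
lemma aux_nonneg_closure {p q : ℝ} {f : ℝ → ℝ} (hpq : p < q)
    (hf : ContinuousOn f (Icc p q)) (h : ∀ x ∈ Ioo p q, 0 ≤ f x) :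
    ∀ x ∈ Icc p q, 0 ≤ f x := by
  intro x hx
  have hxcl : x ∈ closure (Ioo p q) := by rw [closure_Ioo (ne_of_lt hpq)]; exact hx
  have hne : (nhdsWithin x (Ioo p q)).NeBot := mem_closure_iff_nhdsWithin_neBot.1 hxcl
  have htend : Tendsto f (nhdsWithin x (Ioo p q)) (nhds (f x)) :=
    (hf x hx).mono Ioo_subset_Icc_self
  refine ge_of_tendsto htend ?_
  filter_upwards [self_mem_nhdsWithin] with y hy using h y hy


/-- Weak maximum principle for the degenerate operator on the rectangle. -/
lemma aux_max_principle (l T : ℝ) (hl : 0 < l) (hT : 0 < T)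
    (a a' q : ℝ → ℝ)
    (han : ∀ x ∈ Icc (0:ℝ) l, 0 ≤ a x) (ha0 : a 0 = 0) (hal : a l = 0)
    (ha'0 : a' 0 = 0) (ha'l : a' l = 0)
    (hqn : ∀ x ∈ Icc (0:ℝ) l, 0 ≤ q x)
    (v vt vx vxx : ℝ → ℝ → ℝ)
    (hc : ContinuousOn (fun p : ℝ × ℝ => v p.1 p.2) (Icc (0:ℝ) l ×ˢ Icc (0:ℝ) T))
    (hvt : ∀ x ∈ Icc (0:ℝ) l, ∀ t ∈ Ioc (0:ℝ) T,
      HasDerivWithinAt (fun τ => v x τ) (vt x t) (Icc (0:ℝ) T) t)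
    (hvx : ∀ x ∈ Icc (0:ℝ) l, ∀ t ∈ Ioc (0:ℝ) T,
      HasDerivWithinAt (fun s => v s t) (vx x t) (Icc (0:ℝ) l) x)
    (hvxx : ∀ x ∈ Icc (0:ℝ) l, ∀ t ∈ Ioc (0:ℝ) T,
      HasDerivWithinAt (fun s => vx s t) (vxx x t) (Icc (0:ℝ) l) x)
    (hineq : ∀ x ∈ Icc (0:ℝ) l, ∀ t ∈ Ioc (0:ℝ) T,
      vt x t - (a x * vxx x t + a' x * vx x t) + q x * v x t ≤ 0)
    (hinit : ∀ x ∈ Icc (0:ℝ) l, v x 0 ≤ 0) :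
    ∀ x ∈ Icc (0:ℝ) l, ∀ t ∈ Icc (0:ℝ) T, v x t ≤ 0 := by
  -- first show v x t ≤ ε * t for every ε > 0
  have key : ∀ ε > (0:ℝ), ∀ x ∈ Icc (0:ℝ) l, ∀ t ∈ Icc (0:ℝ) T, v x t - ε * t ≤ 0 := by
    intro ε hε x hx t ht
    by_contra hcon
    push_neg at hcon
    -- maximum of g over the rectangle
    set R : Set (ℝ × ℝ) := Icc (0:ℝ) l ×ˢ Icc (0:ℝ) T with hR
    have hRcomp : IsCompact R := isCompact_Icc.prod isCompact_Icc
    have hRne : R.Nonempty := ⟨(x, t), hx, ht⟩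
    have hgc : ContinuousOn (fun p : ℝ × ℝ => v p.1 p.2 - ε * p.2) R :=
      hc.sub ((continuous_const.mul continuous_snd).continuousOn)
    obtain ⟨⟨x0, t0⟩, hmem, hmax⟩ := hRcomp.exists_isMaxOn hRne hgc
    have hx0 : x0 ∈ Icc (0:ℝ) l := hmem.1
    have ht0 : t0 ∈ Icc (0:ℝ) T := hmem.2
    have hMpos : 0 < v x0 t0 - ε * t0 :=
      lt_of_lt_of_le hcon (by have h := hmax (Set.mem_prod.2 ⟨hx, ht⟩ : ((x:ℝ),t) ∈ R); simpa using h)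
    -- t0 > 0
    have ht0pos : 0 < t0 := by
      by_contra ht0n
      push_neg at ht0n
      have ht00 : t0 = 0 := le_antisymm ht0n ht0.1
      rw [ht00] at hMpos
      simp at hMpos
      linarith [hinit x0 hx0]
    have ht0Ioc : t0 ∈ Ioc (0:ℝ) T := ⟨ht0pos, ht0.2⟩
    -- time derivative at (x0,t0) is ≥ ε
    have htder : ε ≤ vt x0 t0 := by
      have hg : HasDerivWithinAt (fun τ => v x0 τ - ε * τ) (vt x0 t0 - ε) (Icc 0 t0) t0 := by
        have h1 := (hvt x0 hx0 t0 ht0Ioc).sub ((hasDerivWithinAt_id t0 (Icc (0:ℝ) T)).const_mul ε)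
        simp only [mul_one] at h1
        exact h1.mono (Icc_subset_Icc (le_refl _) ht0.2)
      have := aux_deriv_nonneg_right_max ht0pos hg ?_
      · linarith
      · intro τ hτ
        have hτT : τ ∈ Icc (0:ℝ) T := ⟨hτ.1, le_trans hτ.2 ht0.2⟩
        have h := hmax (Set.mem_prod.2 ⟨hx0, hτT⟩ : ((x0:ℝ), τ) ∈ R)
        simpa using h
    -- the positivity of v at the max point
    have hvpos : 0 < v x0 t0 := by nlinarith [ht0.1]
    have hmaxx : ∀ s ∈ Icc (0:ℝ) l, v s t0 ≤ v x0 t0 := by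
      intro s hs
      have h := hmax (Set.mem_prod.2 ⟨hs, ht0⟩ : ((s:ℝ), t0) ∈ R)
      simp only [Set.mem_setOf_eq] at h
      linarith
    have hfinal : (0:ℝ) < vt x0 t0 - (a x0 * vxx x0 t0 + a' x0 * vx x0 t0) + q x0 * v x0 t0 := by
      rcases eq_or_lt_of_le hx0.1 with h0 | h0
      · -- x0 = 0
        have hax : a x0 * vxx x0 t0 + a' x0 * vx x0 t0 = 0 := by
          rw [← h0, ha0, ha'0]; ring
        have hq := mul_nonneg (hqn x0 hx0) hvpos.le
        linarith
      rcases eq_or_lt_of_le hx0.2 with hll | hll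
      · have hax : a x0 * vxx x0 t0 + a' x0 * vx x0 t0 = 0 := by
          rw [hll, hal, ha'l]; ring
        have hq := mul_nonneg (hqn x0 hx0) hvpos.le
        linarith
      · -- interior
        have hxIoo : x0 ∈ Ioo (0:ℝ) l := ⟨h0, hll⟩
        have h1 : vx x0 t0 = 0 :=
          aux_interior_max_deriv_zero hxIoo (hvx x0 hx0 t0 ht0Ioc) hmaxx
        have h2 : vxx x0 t0 ≤ 0 :=
          aux_interior_max_deriv2_nonpos hxIoo
            (fun s hs => hvx s hs t0 ht0Ioc) (hvxx x0 hx0 t0 ht0Ioc) hmaxx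
        have h3 := mul_nonneg (hqn x0 hx0) hvpos.le
        have h4 : 0 ≤ a x0 * (-vxx x0 t0) := mul_nonneg (han x0 hx0) (by linarith)
        rw [h1]
        nlinarith
    linarith [hineq x0 hx0 t0 ht0Ioc]
  -- conclude
  intro x hx t ht
  have h2 : ∀ ε > (0:ℝ), v x t ≤ 0 + ε := by
    intro ε hε
    have h3 := key (ε / (T + 1)) (by positivity) x hx t ht
    have : (ε / (T+1)) * t ≤ ε := by
      rw [div_mul_eq_mul_div, div_le_iff₀ (by linarith)]
      nlinarith [ht.2, ht.1]
    linarith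
  simpa using le_of_forall_pos_le_add h2


lemma aux_quad {lam' C1 F K : ℝ} (hlam' : 0 < lam') (hK : 4*lam'*K = C1^2+1) :
    0 ≤ lam'*F^2 - C1*F + K := by
  nlinarith [sq_nonneg (2*lam'*F - C1), mul_pos hlam' hlam']

/-- pointwise subsolution inequality for the travelling bump -/
lemma aux_bump_ineq (A A' Qb m₀ ρ vel av a'v qv yv lam C1 : ℝ)
    (hC1 : C1 = 30*A + 6*A'*ρ + 6*ρ*|vel|)
    (hlam : lam = Qb + ((C1^2+1)/(96*m₀*ρ^2)))
    (hm₀ : 0 < m₀) (hρ : 0 < ρ)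
    (hav1 : m₀ ≤ av) (hav2 : av ≤ A) (ha'v : |a'v| ≤ A') (hqv1 : 0 ≤ qv) (hqv2 : qv ≤ Qb)
    (hF : 0 < ρ^2 - yv^2) :
    -lam*(ρ^2 - yv^2)^3
      + 6*(ρ^2 - yv^2)^2*yv*vel - av*(24*(ρ^2 - yv^2)*yv^2 - 6*(ρ^2 - yv^2)^2)
      - a'v*(-6*((ρ^2 - yv^2)^2*yv)) + qv*(ρ^2 - yv^2)^3 ≤ 0 := by
  subst hlam hC1
  set F := ρ^2 - yv^2 with hFdef
  set C1 := 30*A + 6*A'*ρ + 6*ρ*|vel| with hC1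
  set lam := Qb + ((C1^2+1)/(96*m₀*ρ^2)) with hlam
  have hF0 : 0 < F := hF
  have habs : |yv| ≤ ρ := by
    have h1 : yv^2 ≤ ρ^2 := by nlinarith
    nlinarith [sq_abs yv, abs_nonneg yv]
  have hA0 : 0 < A := lt_of_lt_of_le hm₀ (le_trans hav1 hav2)
  have hA'0 : 0 ≤ A' := le_trans (abs_nonneg _) ha'v
  have hlam' : 0 < lam - Qb := by
    have h : 0 < (C1^2+1)/(96*m₀*ρ^2) := by positivity
    simp only [hlam]; linarith
  have hK : 4*(lam - Qb)*(24*m₀*ρ^2) = C1^2+1 := by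
    have h96 : (96:ℝ)*m₀*ρ^2 ≠ 0 := by positivity
    field_simp [hlam]
    rw [hlam]
    field_simp
    ring
  have hquad := aux_quad (F := F) hlam' hK
  -- term bounds
  have t1 : yv*vel ≤ ρ*|vel| :=
    calc yv*vel ≤ |yv*vel| := le_abs_self _
    _ = |yv| * |vel| := abs_mul _ _
    _ ≤ ρ*|vel| := mul_le_mul_of_nonneg_right habs (abs_nonneg _)
  have t1' : 6*F*(yv*vel) ≤ 6*F*(ρ*|vel|) :=
    mul_le_mul_of_nonneg_left t1 (by linarith)
  have t2 : a'v*yv ≤ A'*ρ :=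
    calc a'v*yv ≤ |a'v*yv| := le_abs_self _
    _ = |a'v| * |yv| := abs_mul _ _
    _ ≤ A'*ρ := mul_le_mul ha'v habs (abs_nonneg _) hA'0
  have t2' : 6*F*(a'v*yv) ≤ 6*F*(A'*ρ) := mul_le_mul_of_nonneg_left t2 (by linarith)
  have t3 : qv*F^2 ≤ Qb*F^2 := mul_le_mul_of_nonneg_right hqv2 (sq_nonneg _)
  have t4 : 24*m₀*yv^2 ≤ 24*av*yv^2 := by
    have := mul_le_mul_of_nonneg_right hav1 (sq_nonneg yv)
    linarith
  have t5 : 6*av*F ≤ 6*A*F := by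
    have := mul_le_mul_of_nonneg_right hav2 hF0.le
    linarith
  have hm₀A : m₀ ≤ A := le_trans hav1 hav2
  have hB : -lam*F^2 + 6*F*(yv*vel) - 24*av*yv^2 + 6*av*F + 6*F*(a'v*yv) + qv*F^2 ≤ 0 := by
    have step1 : -lam*F^2 + 6*F*(yv*vel) - 24*av*yv^2 + 6*av*F + 6*F*(a'v*yv) + qv*F^2
        ≤ -lam*F^2 + 6*F*(ρ*|vel|) - 24*m₀*yv^2 + 6*A*F + 6*F*(A'*ρ) + Qb*F^2 := by
      linarith
    have hy2 : yv^2 = ρ^2 - F := by simp [hFdef]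
    have step2 : -lam*F^2 + 6*F*(ρ*|vel|) - 24*m₀*yv^2 + 6*A*F + 6*F*(A'*ρ) + Qb*F^2
        = -((lam-Qb)*F^2 - (6*ρ*|vel| + 6*A + 24*m₀ + 6*A'*ρ)*F + 24*m₀*ρ^2) := by
      rw [hy2]; ring
    have step3 : (6*ρ*|vel| + 6*A + 24*m₀ + 6*A'*ρ)*F ≤ C1*F := by
      have hc : 6*ρ*|vel| + 6*A + 24*m₀ + 6*A'*ρ ≤ C1 := by
        simp only [hC1]; linarith
      exact mul_le_mul_of_nonneg_right hc hF0.le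
    have step4 : -((lam-Qb)*F^2 - (6*ρ*|vel| + 6*A + 24*m₀ + 6*A'*ρ)*F + 24*m₀*ρ^2)
        ≤ -((lam-Qb)*F^2 - C1*F + 24*m₀*ρ^2) := by linarith
    calc -lam*F^2 + 6*F*(yv*vel) - 24*av*yv^2 + 6*av*F + 6*F*(a'v*yv) + qv*F^2
        ≤ -lam*F^2 + 6*F*(ρ*|vel|) - 24*m₀*yv^2 + 6*A*F + 6*F*(A'*ρ) + Qb*F^2 := step1
      _ = -((lam-Qb)*F^2 - (6*ρ*|vel| + 6*A + 24*m₀ + 6*A'*ρ)*F + 24*m₀*ρ^2) := step2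
      _ ≤ -((lam-Qb)*F^2 - C1*F + 24*m₀*ρ^2) := step4
      _ ≤ 0 := by linarith
  calc -lam*F^3 + 6*F^2*yv*vel - av*(24*F*yv^2 - 6*F^2) - a'v*(-6*(F^2*yv)) + qv*F^3
      = F * (-lam*F^2 + 6*F*(yv*vel) - 24*av*yv^2 + 6*av*F + 6*F*(a'v*yv) + qv*F^2) := by
        ring
    _ ≤ 0 := mul_nonpos_of_nonneg_of_nonpos hF0.le hB

lemma aux_abs_le_of_sq_le_sq {d ρ : ℝ} (hρ : 0 ≤ ρ) (h : d^2 ≤ ρ^2) : |d| ≤ ρ := by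
  rw [← Real.sqrt_sq hρ, ← Real.sqrt_sq_eq_abs]
  exact Real.sqrt_le_sqrt h

set_option maxHeartbeats 2000000 in
/-- Travelling-bump positivity: a nonnegative solution with initial data ≥ c0 near x1
is strictly positive at (x0, T). -/
lemma aux_bump (l T : ℝ) (hl : 0 < l) (hT : 0 < T)
    (a a' q : ℝ → ℝ) (A A' Qb m₀ : ℝ)
    (hA : ∀ x ∈ Icc (0:ℝ) l, a x ≤ A)
    (hA' : ∀ x ∈ Icc (0:ℝ) l, |a' x| ≤ A')
    (hQ : ∀ x ∈ Icc (0:ℝ) l, q x ≤ Qb)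
    (hqn : ∀ x ∈ Icc (0:ℝ) l, 0 ≤ q x)
    (x0 x1 ρ c0 : ℝ) (hx0 : x0 ∈ Ioo (0:ℝ) l) (hx1 : x1 ∈ Ioo (0:ℝ) l)
    (hρ : 0 < ρ) (hc0 : 0 < c0) (hm₀ : 0 < m₀)
    (hJ : Icc (min x0 x1 - ρ) (max x0 x1 + ρ) ⊆ Ioo (0:ℝ) l)
    (hm₀a : ∀ x ∈ Icc (min x0 x1 - ρ) (max x0 x1 + ρ), m₀ ≤ a x)
    (u ut ux uxx : ℝ → ℝ → ℝ)
    (huc : ContinuousOn (fun p : ℝ × ℝ => u p.1 p.2) (Icc (0:ℝ) l ×ˢ Icc (0:ℝ) T))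
    (hut : ∀ x ∈ Icc (0:ℝ) l, ∀ t ∈ Ioc (0:ℝ) T,
      HasDerivWithinAt (fun τ => u x τ) (ut x t) (Icc (0:ℝ) T) t)
    (hux : ∀ x ∈ Icc (0:ℝ) l, ∀ t ∈ Ioc (0:ℝ) T,
      HasDerivWithinAt (fun s => u s t) (ux x t) (Icc (0:ℝ) l) x)
    (huxx : ∀ x ∈ Icc (0:ℝ) l, ∀ t ∈ Ioc (0:ℝ) T,
      HasDerivWithinAt (fun s => ux s t) (uxx x t) (Icc (0:ℝ) l) x)
    (hL : ∀ x ∈ Icc (0:ℝ) l, ∀ t ∈ Ioc (0:ℝ) T,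
      ut x t - (a x * uxx x t + a' x * ux x t) + q x * u x t = 0)
    (hupos : ∀ x ∈ Icc (0:ℝ) l, ∀ t ∈ Icc (0:ℝ) T, 0 ≤ u x t)
    (hinitc : ∀ x ∈ Icc (x1 - ρ) (x1 + ρ), c0 ≤ u x 0) :
    0 < u x0 T := by
  have hTne : T ≠ 0 := ne_of_gt hT
  set vel : ℝ := (x0 - x1)/T with hvel
  have hvelT : vel * T = x0 - x1 := by rw [hvel]; field_simp
  set C1 : ℝ := 30*A + 6*A'*ρ + 6*ρ*|vel| with hC1
  set lam : ℝ := Qb + ((C1^2+1)/(96*m₀*ρ^2)) with hlam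
  set ee : ℝ := c0/ρ^6 with hee
  clear_value vel C1 lam ee
  have hee0 : 0 < ee := by rw [hee]; positivity
  set z : ℝ → ℝ → ℝ :=
    fun x t => ee * Real.exp (-(lam*t)) * (ρ^2 - (x - (x1 + vel*t))^2)^3 with hz
  clear_value z
  -- derivative of the inner quadratic in x
  have hFd : ∀ (x t : ℝ), HasDerivAt (fun s : ℝ => ρ^2 - (s - (x1 + vel*t))^2)
      (-(2*(x - (x1 + vel*t)))) x := by
    intro x t
    have h1 : HasDerivAt (fun s : ℝ => s - (x1 + vel*t)) 1 x := (hasDerivAt_id x).sub_const _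
    have h2 := (h1.pow 2).const_sub (ρ^2)
    refine h2.congr_deriv ?_
    simp
  -- x derivative of z
  have hzx : ∀ (x t : ℝ), HasDerivAt (fun s => z s t)
      (ee * Real.exp (-(lam*t)) * (-6*((ρ^2 - (x - (x1 + vel*t))^2)^2*(x - (x1 + vel*t))))) x := by
    intro x t
    simp only [hz]
    have h3 := ((hFd x t).pow 3).const_mul (ee * Real.exp (-(lam*t)))
    refine h3.congr_deriv ?_
    ring
  -- second x derivative of z (i.e. derivative of the zx formula)
  have hzxx : ∀ (x t : ℝ), HasDerivAt
      (fun s => ee * Real.exp (-(lam*t)) * (-6*((ρ^2 - (s - (x1 + vel*t))^2)^2*(s - (x1 + vel*t)))))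
      (ee * Real.exp (-(lam*t)) *
        (24*(ρ^2 - (x - (x1 + vel*t))^2)*(x - (x1 + vel*t))^2 - 6*(ρ^2 - (x - (x1 + vel*t))^2)^2)) x := by
    intro x t
    have h1 : HasDerivAt (fun s : ℝ => s - (x1 + vel*t)) 1 x := (hasDerivAt_id x).sub_const _
    have h2 := (((hFd x t).pow 2).mul h1).const_mul ((-6) * (ee * Real.exp (-(lam*t))))
    have hfun : (fun s => ee * Real.exp (-(lam*t)) *
        (-6*((ρ^2 - (s - (x1 + vel*t))^2)^2*(s - (x1 + vel*t)))))
        = (fun s => (-6) * (ee * Real.exp (-(lam*t))) *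
            ((ρ^2 - (s - (x1 + vel*t))^2)^2 * (s - (x1 + vel*t)))) := by
      funext s; ring
    rw [hfun]
    refine h2.congr_deriv ?_
    simp only [Pi.pow_apply]
    ring
  -- t derivative of z
  have hzt : ∀ (x t : ℝ), HasDerivAt (fun τ => z x τ)
      (ee * Real.exp (-(lam*t)) * (-lam*(ρ^2 - (x - (x1 + vel*t))^2)^3
        + 6*(ρ^2 - (x - (x1 + vel*t))^2)^2*(x - (x1 + vel*t))*vel)) t := by
    intro x t
    simp only [hz]
    have he : HasDerivAt (fun τ : ℝ => -(lam*τ)) (-lam) t := by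
      have h := ((hasDerivAt_id' t).const_mul lam).neg; rw [mul_one] at h; exact h
    have hexp : HasDerivAt (fun τ : ℝ => ee * Real.exp (-(lam*τ)))
        (ee * (Real.exp (-(lam*t)) * -lam)) t := he.exp.const_mul ee
    have hy : HasDerivAt (fun τ : ℝ => x - (x1 + vel*τ)) (-vel) t := by
      have h1 : HasDerivAt (fun τ : ℝ => x1 + vel*τ) vel t := by
        simpa using ((hasDerivAt_id t).const_mul vel).const_add x1
      simpa using h1.const_sub x
    have hF3 := ((hy.pow 2).const_sub (ρ^2)).pow 3
    have hmul := hexp.mul hF3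
    refine hmul.congr_deriv ?_
    simp
    ring
  -- continuity of z
  have hzc : Continuous (fun p : ℝ × ℝ => z p.1 p.2) := by
    simp only [hz]
    fun_prop
  -- geometry of the moving centre
  have hmpath : ∀ t ∈ Icc (0:ℝ) T, min x0 x1 ≤ x1 + vel*t ∧ x1 + vel*t ≤ max x0 x1 := by
    intro t ht
    rcases le_total 0 vel with hv | hv
    · have h1 : vel * t ≤ vel * T := by nlinarith [mul_nonneg (sub_nonneg.2 ht.2) hv]
      have h2 : 0 ≤ vel * t := mul_nonneg hv ht.1
      constructor
      · have := min_le_right x0 x1; linarith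
      · have := le_max_left x0 x1; linarith
    · have h1 : vel * T ≤ vel * t := by
        nlinarith [mul_nonneg (sub_nonneg.2 ht.2) (neg_nonneg.2 hv)]
      have h2 : vel * t ≤ 0 := mul_nonpos_of_nonpos_of_nonneg hv ht.1
      constructor
      · have := min_le_left x0 x1; linarith
      · have := le_max_right x0 x1; linarith
  -- the slanted space-time domain
  set P : Set (ℝ × ℝ) :=
    {p : ℝ × ℝ | p.2 ∈ Icc (0:ℝ) T ∧ (p.1 - (x1 + vel*p.2))^2 ≤ ρ^2} with hP
  have hPJ : ∀ p ∈ P, p.1 ∈ Icc (min x0 x1 - ρ) (max x0 x1 + ρ) := by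
    rintro ⟨px, pt⟩ ⟨hpt, hpd⟩
    have habs := aux_abs_le_of_sq_le_sq hρ.le hpd
    obtain ⟨hm1, hm2⟩ := hmpath pt hpt
    obtain ⟨hd1, hd2⟩ := abs_le.1 habs
    constructor <;> simp only at hd1 hd2 ⊢ <;> linarith
  have hPR : P ⊆ Icc (0:ℝ) l ×ˢ Icc (0:ℝ) T := by
    rintro ⟨px, pt⟩ hp
    have h1 := hJ (hPJ _ hp)
    exact ⟨⟨h1.1.le, h1.2.le⟩, hp.1⟩
  have hPcl : IsClosed P := by
    apply IsClosed.inter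
    · exact isClosed_Icc.preimage continuous_snd
    · exact isClosed_le
        ((continuous_fst.sub (continuous_const.add (continuous_const.mul continuous_snd))).pow 2)
        continuous_const
  have hPcomp : IsCompact P :=
    (isCompact_Icc.prod isCompact_Icc).of_isClosed_subset hPcl hPR
  -- membership of the endpoint
  have hy0T : x0 - (x1 + vel*T) = 0 := by rw [hvelT]; ring
  have hx0TP : ((x0:ℝ), T) ∈ P := by
    refine ⟨⟨hT.le, le_refl _⟩, ?_⟩
    show (x0 - (x1 + vel*T))^2 ≤ ρ^2
    rw [hy0T]
    norm_num
    positivity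
  -- the comparison inequality on P
  have hcompa : ∀ σ > (0:ℝ), ∀ p ∈ P, z p.1 p.2 - u p.1 p.2 - σ*p.2 ≤ 0 := by
    intro σ hσ
    by_contra hcon
    push_neg at hcon
    obtain ⟨pw, hpwP, hpwpos⟩ := hcon
    have hPne : P.Nonempty := ⟨pw, hpwP⟩
    have hgc : ContinuousOn (fun p : ℝ × ℝ => z p.1 p.2 - u p.1 p.2 - σ*p.2) P :=
      ((hzc.continuousOn.sub (huc.mono hPR)).sub
        ((continuous_const.mul continuous_snd).continuousOn))
    obtain ⟨⟨xx, tt⟩, hmemP, hgmax⟩ := hPcomp.exists_isMaxOn hPne hgc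
    have hgpos : 0 < z xx tt - u xx tt - σ*tt := by
      have h := hgmax hpwP
      simp only [Set.mem_setOf_eq] at h
      linarith
    obtain ⟨htt, hsq⟩ := hmemP
    have hxxJ : xx ∈ Icc (min x0 x1 - ρ) (max x0 x1 + ρ) := hPJ _ ⟨htt, hsq⟩
    have hxxIoo : xx ∈ Ioo (0:ℝ) l := hJ hxxJ
    have hxxl : xx ∈ Icc (0:ℝ) l := ⟨hxxIoo.1.le, hxxIoo.2.le⟩
    have hu0 : 0 ≤ u xx tt := hupos xx hxxl tt htt
    -- case t = 0
    rcases eq_or_lt_of_le htt.1 with htt0 | htt0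
    · exfalso
      have htt0' : tt = 0 := htt0.symm
      subst htt0'
      have hsq' : (xx - x1)^2 ≤ ρ^2 := by
        have := hsq; simp only [mul_zero, add_zero] at this; exact this
      have habs := abs_le.1 (aux_abs_le_of_sq_le_sq hρ.le hsq')
      have hxmem : xx ∈ Icc (x1 - ρ) (x1 + ρ) := ⟨by linarith [habs.1], by linarith [habs.2]⟩
      have huc0 := hinitc xx hxmem
      have hzval : z xx 0 ≤ c0 := by
        simp only [hz, mul_zero, neg_zero, Real.exp_zero, mul_one, add_zero]
        have hF1 : ρ^2 - (xx - x1)^2 ≤ ρ^2 := by nlinarith [sq_nonneg (xx - x1)]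
        have hF0 : 0 ≤ ρ^2 - (xx - x1)^2 := by linarith [hsq']
        have hcube : (ρ^2 - (xx - x1)^2)^3 ≤ (ρ^2)^3 :=
          pow_le_pow_left₀ hF0 hF1 3
        have heq : ee * (ρ^2)^3 = c0 := by
          rw [hee, show ((ρ:ℝ)^2)^3 = ρ^6 by ring]
          field_simp
        calc ee * (ρ^2 - (xx - x1)^2)^3 ≤ ee * (ρ^2)^3 :=
              mul_le_mul_of_nonneg_left hcube hee0.le
          _ = c0 := heq
      simp only [mul_zero] at hgpos
      linarith
    -- t > 0 henceforth
    have httIoc : tt ∈ Ioc (0:ℝ) T := ⟨htt0, htt.2⟩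
    -- case F = 0 (lateral boundary)
    rcases eq_or_lt_of_le hsq with hFb | hFb
    · exfalso
      have hzz : z xx tt = 0 := by
        simp only [hz]
        have : ρ^2 - (xx - (x1 + vel*tt))^2 = 0 := by linarith [hFb]
        rw [this]
        ring
      rw [hzz] at hgpos
      nlinarith
    -- interior case
    exfalso
    have hFpos : 0 < ρ^2 - (xx - (x1 + vel*tt))^2 := by linarith
    have habslt : |xx - (x1 + vel*tt)| < ρ := by
      have h1 : |xx - (x1 + vel*tt)| ≤ ρ := aux_abs_le_of_sq_le_sq hρ.le hsq
      rcases eq_or_lt_of_le h1 with he | he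
      · exfalso
        have : (xx - (x1 + vel*tt))^2 = ρ^2 := by
          rw [← sq_abs, he]
        linarith
      · exact he
    -- instantiate the z-derivatives at the max point
    have hztv := hzt xx tt
    have hzxv := hzx xx tt
    have hzxxv := hzxx xx tt
    set yv : ℝ := xx - (x1 + vel*tt) with hyv
    set w : ℝ := ee * Real.exp (-(lam*tt)) with hw
    clear_value yv w
    have hw0 : 0 < w := by rw [hw]; positivity
    -- time-direction analysis
    set η : ℝ := min tt ((ρ - |yv|)/(|vel|+1)) with hη
    clear_value η
    have hη0 : 0 < η := by
      rw [hη]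
      apply lt_min htt0
      apply div_pos (by linarith) (by positivity)
    have hηtt : η ≤ tt := by rw [hη]; exact min_le_left _ _
    have hseg : ∀ τ ∈ Icc (tt - η) tt, ((xx:ℝ), τ) ∈ P := by
      intro τ hτ
      have hτ0 : 0 ≤ τ := by linarith [hτ.1]
      have hτT : τ ≤ T := le_trans hτ.2 htt.2
      refine ⟨⟨hτ0, hτT⟩, ?_⟩
      show (xx - (x1 + vel*τ))^2 ≤ ρ^2
      have hd : xx - (x1 + vel*τ) = yv + vel*(tt - τ) := by rw [hyv]; ring
      have h1 : |xx - (x1 + vel*τ)| ≤ |yv| + |vel| *(tt - τ) := by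
        rw [hd]
        refine (abs_add_le _ _).trans ?_
        rw [abs_mul, abs_of_nonneg (by linarith [hτ.2] : (0:ℝ) ≤ tt - τ)]
      have h2 : |vel| *(tt-τ) ≤ |vel| *η :=
        mul_le_mul_of_nonneg_left (by linarith [hτ.1]) (abs_nonneg vel)
      have h3 : |vel| *η ≤ ρ - |yv| := by
        have hηle : η ≤ (ρ-|yv|)/(|vel|+1) := by rw [hη]; exact min_le_right _ _
        have h4 : |vel| *η ≤ |vel| *((ρ-|yv|)/(|vel|+1)) :=
          mul_le_mul_of_nonneg_left hηle (abs_nonneg vel)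
        have hpos : (0:ℝ) < |vel|+1 := by positivity
        have h5 : |vel| *((ρ-|yv|)/(|vel|+1)) ≤ ρ - |yv| := by
          rw [mul_comm, div_mul_eq_mul_div, div_le_iff₀ hpos]
          nlinarith [abs_nonneg vel, habslt.le]
        linarith
      have habs2 : |xx - (x1 + vel*τ)| ≤ ρ := by linarith
      have hb := abs_le.1 habs2
      exact sq_le_sq' (by linarith [hb.1]) hb.2
    have htder : 0 ≤ w * (-lam*(ρ^2 - yv^2)^3 + 6*(ρ^2 - yv^2)^2*yv*vel) - ut xx tt - σ := by
      have hgd : HasDerivWithinAt (fun τ => z xx τ - u xx τ - σ*τ)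
          (w * (-lam*(ρ^2 - yv^2)^3 + 6*(ρ^2 - yv^2)^2*yv*vel) - ut xx tt - σ)
          (Icc (tt-η) tt) tt := by
        have h1 := hztv.hasDerivWithinAt (s := Icc (tt-η) tt)
        have hsub2 : Icc (tt-η) tt ⊆ Icc (0:ℝ) T :=
          Icc_subset_Icc (by linarith) htt.2
        have h2 := (hut xx hxxl tt httIoc).mono hsub2
        have h3 := (hasDerivWithinAt_id tt (Icc (tt-η) tt)).const_mul σ
        refine ((h1.sub h2).sub h3).congr_deriv ?_
        ring
      apply aux_deriv_nonneg_right_max (by linarith : tt - η < tt) hgd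
      intro τ hτ
      have h := hgmax (hseg τ hτ)
      simpa using h
    -- space-direction analysis
    have hmt := hmpath tt htt
    have hSJ : Icc ((x1+vel*tt) - ρ) ((x1+vel*tt) + ρ) ⊆ Icc (min x0 x1 - ρ) (max x0 x1 + ρ) := by
      intro s hs
      exact ⟨by linarith [hmt.1, hs.1], by linarith [hmt.2, hs.2]⟩
    have hSl : Icc ((x1+vel*tt) - ρ) ((x1+vel*tt) + ρ) ⊆ Icc (0:ℝ) l := by
      intro s hs
      have h := hJ (hSJ hs)
      exact ⟨h.1.le, h.2.le⟩
    have hSP : ∀ s ∈ Icc ((x1+vel*tt) - ρ) ((x1+vel*tt) + ρ), ((s:ℝ), tt) ∈ P := by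
      intro s hs
      exact ⟨htt, sq_le_sq' (by linarith [hs.1]) (by linarith [hs.2])⟩
    have hxxS : xx ∈ Ioo ((x1+vel*tt) - ρ) ((x1+vel*tt) + ρ) := by
      have hb := abs_lt.1 habslt
      have hyv' : yv = xx - (x1 + vel*tt) := hyv
      constructor
      · linarith [hb.1]
      · linarith [hb.2]
    have hmaxS : ∀ s ∈ Icc ((x1+vel*tt) - ρ) ((x1+vel*tt) + ρ),
        z s tt - u s tt ≤ z xx tt - u xx tt := by
      intro s hs
      have h := hgmax (hSP s hs)
      simp only [Set.mem_setOf_eq] at h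
      linarith
    have hxxSmem : xx ∈ Icc ((x1+vel*tt) - ρ) ((x1+vel*tt) + ρ) :=
      ⟨hxxS.1.le, hxxS.2.le⟩
    have h1 : w * (-6*((ρ^2 - yv^2)^2*yv)) - ux xx tt = 0 := by
      apply aux_interior_max_deriv_zero hxxS ?_ hmaxS
      exact (hzxv.hasDerivWithinAt).sub ((hux xx hxxl tt httIoc).mono hSl)
    have hfd : ∀ s ∈ Icc ((x1+vel*tt) - ρ) ((x1+vel*tt) + ρ),
        HasDerivWithinAt (fun s' => z s' tt - u s' tt)
          ((fun s' => w * (-6*((ρ^2 - (s' - (x1 + vel*tt))^2)^2*(s' - (x1 + vel*tt)))) - ux s' tt) s)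
          (Icc ((x1+vel*tt) - ρ) ((x1+vel*tt) + ρ)) s := by
      intro s hs
      have h := ((hzx s tt).hasDerivWithinAt (s := Icc ((x1+vel*tt) - ρ) ((x1+vel*tt) + ρ))).sub
        ((hux s (hSl hs) tt httIoc).mono hSl)
      rw [← hw] at h
      exact h
    have h2 : w * (24*(ρ^2 - yv^2)*yv^2 - 6*(ρ^2 - yv^2)^2) - uxx xx tt ≤ 0 := by
      apply aux_interior_max_deriv2_nonpos hxxS hfd ?_ hmaxS
      exact (hzxxv.hasDerivWithinAt).sub ((huxx xx hxxl tt httIoc).mono hSl)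
    -- the subsolution inequality and the equation
    have hFpos' : 0 < ρ^2 - yv^2 := hFpos
    have hineq := aux_bump_ineq A A' Qb m₀ ρ vel (a xx) (a' xx) (q xx) yv lam C1 hC1 hlam
      hm₀ hρ (hm₀a xx hxxJ) (hA xx hxxl) (hA' xx hxxl) (hqn xx hxxl) (hQ xx hxxl) hFpos'
    have hLz : w * (-lam*(ρ^2 - yv^2)^3
        + 6*(ρ^2 - yv^2)^2*yv*vel - a xx*(24*(ρ^2 - yv^2)*yv^2 - 6*(ρ^2 - yv^2)^2)
        - a' xx*(-6*((ρ^2 - yv^2)^2*yv)) + q xx*(ρ^2 - yv^2)^3) ≤ 0 :=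
      mul_nonpos_of_nonneg_of_nonpos hw0.le hineq
    have hLu := hL xx hxxl tt httIoc
    have hzval : z xx tt = w * (ρ^2 - yv^2)^3 := by
      simp only [hz]
      rw [hw, hyv]
    have hzum : 0 < z xx tt - u xx tt := by nlinarith [mul_pos hσ htt0]
    have hzum' : 0 < w * (ρ^2 - yv^2)^3 - u xx tt := by rw [← hzval]; exact hzum
    have ha0 : 0 < a xx := lt_of_lt_of_le hm₀ (hm₀a xx hxxJ)
    have hint1 : a xx * (w * (24*(ρ^2 - yv^2)*yv^2 - 6*(ρ^2 - yv^2)^2) - uxx xx tt) ≤ 0 :=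
      mul_nonpos_of_nonneg_of_nonpos ha0.le h2
    have hint2 : 0 ≤ q xx * (w * (ρ^2 - yv^2)^3 - u xx tt) :=
      mul_nonneg (hqn xx hxxl) hzum'.le
    have hint3 : a' xx * (w * (-6*((ρ^2 - yv^2)^2*yv)) - ux xx tt) = 0 :=
      mul_eq_zero_of_right _ h1
    have hexp : w * (-lam*(ρ^2 - yv^2)^3
        + 6*(ρ^2 - yv^2)^2*yv*vel - a xx*(24*(ρ^2 - yv^2)*yv^2 - 6*(ρ^2 - yv^2)^2)
        - a' xx*(-6*((ρ^2 - yv^2)^2*yv)) + q xx*(ρ^2 - yv^2)^3)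
        = (w * (-lam*(ρ^2 - yv^2)^3 + 6*(ρ^2 - yv^2)^2*yv*vel))
          - a xx * (w * (24*(ρ^2 - yv^2)*yv^2 - 6*(ρ^2 - yv^2)^2))
          - a' xx * (w * (-6*((ρ^2 - yv^2)^2*yv)))
          + q xx * (w * (ρ^2 - yv^2)^3) := by ring
    rw [hexp] at hLz
    set P1 : ℝ := w * (-lam*(ρ^2 - yv^2)^3 + 6*(ρ^2 - yv^2)^2*yv*vel) with hP1
    set P2 : ℝ := w * (24*(ρ^2 - yv^2)*yv^2 - 6*(ρ^2 - yv^2)^2) with hP2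
    set P3 : ℝ := w * (-6*((ρ^2 - yv^2)^2*yv)) with hP3
    set P4 : ℝ := w * (ρ^2 - yv^2)^3 with hP4
    clear_value P1 P2 P3 P4
    linarith [hLz, hLu, htder, hint1, hint2, hint3, hσ]
  -- conclude positivity at (x0, T)
  have hzx0T : z x0 T = ee * Real.exp (-(lam*T)) * ρ^6 := by
    simp only [hz, hy0T]
    ring
  have hle : z x0 T - u x0 T ≤ 0 := by
    have h2 : ∀ ε > (0:ℝ), z x0 T - u x0 T ≤ 0 + ε := by
      intro ε hε
      have h3 := hcompa (ε/T) (by positivity) _ hx0TP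
      simp only at h3
      have : (ε/T)*T = ε := by field_simp
      linarith
    exact le_of_forall_pos_le_add h2
  have : 0 < z x0 T := by rw [hzx0T]; positivity
  linarith


set_option maxHeartbeats 2000000 in
theorem aux_key
    (l T δ : ℝ) (hl : 0 < l) (hT : 0 < T) (hδ : 0 < δ)
    (a a' φ q₁ q₂ : ℝ → ℝ)
    (haW : ContDiffOn ℝ 4 a (Icc (-δ) (l + δ)))
    (hanneg : ∀ x ∈ Ioo (-δ) (l + δ), 0 ≤ a x)
    (ha0 : a 0 = 0) (hal : a l = 0)
    (hapos : ∀ x ∈ Ioo (0:ℝ) l, 0 < a x)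
    (ha' : ∀ x ∈ Icc (0:ℝ) l, HasDerivWithinAt a (a' x) (Icc (0:ℝ) l) x)
    (hφW : ContDiffOn ℝ 5 φ (Icc (-δ) (l + δ)))
    (hφn : ∀ x ∈ Ioo (0:ℝ) l, 0 ≤ φ x)
    (hφne : ∃ x ∈ Ioo (0:ℝ) l, φ x ≠ 0)
    (hq₁W : ContDiffOn ℝ 3 q₁ (Icc (-δ) (l + δ)))
    (hq₂W : ContDiffOn ℝ 3 q₂ (Icc (-δ) (l + δ)))
    (hq₁n : ∀ x ∈ Ioo (-δ) (l + δ), 0 ≤ q₁ x)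
    (hq₂n : ∀ x ∈ Ioo (-δ) (l + δ), 0 ≤ q₂ x)
    (hcomp : ∀ x ∈ Ioo (-δ) (l + δ), q₂ x ≤ q₁ x)
    (u₁ u₁t u₁x u₁xx u₂ u₂t u₂x u₂xx : ℝ → ℝ → ℝ)
    (hu₁W : ContDiffOn ℝ 3 (fun p : ℝ × ℝ => u₁ p.1 p.2) (Icc (0:ℝ) l ×ˢ Icc (0:ℝ) T))
    (hu₂W : ContDiffOn ℝ 3 (fun p : ℝ × ℝ => u₂ p.1 p.2) (Icc (0:ℝ) l ×ˢ Icc (0:ℝ) T))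
    (hu₁t : ∀ x ∈ Icc (0:ℝ) l, ∀ t ∈ Ioc (0:ℝ) T,
      HasDerivWithinAt (fun τ => u₁ x τ) (u₁t x t) (Icc (0:ℝ) T) t)
    (hu₁x : ∀ x ∈ Icc (0:ℝ) l, ∀ t ∈ Ioc (0:ℝ) T,
      HasDerivWithinAt (fun s => u₁ s t) (u₁x x t) (Icc (0:ℝ) l) x)
    (hu₁xx : ∀ x ∈ Icc (0:ℝ) l, ∀ t ∈ Ioc (0:ℝ) T,
      HasDerivWithinAt (fun s => u₁x s t) (u₁xx x t) (Icc (0:ℝ) l) x)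
    (hu₂t : ∀ x ∈ Icc (0:ℝ) l, ∀ t ∈ Ioc (0:ℝ) T,
      HasDerivWithinAt (fun τ => u₂ x τ) (u₂t x t) (Icc (0:ℝ) T) t)
    (hu₂x : ∀ x ∈ Icc (0:ℝ) l, ∀ t ∈ Ioc (0:ℝ) T,
      HasDerivWithinAt (fun s => u₂ s t) (u₂x x t) (Icc (0:ℝ) l) x)
    (hu₂xx : ∀ x ∈ Icc (0:ℝ) l, ∀ t ∈ Ioc (0:ℝ) T,
      HasDerivWithinAt (fun s => u₂x s t) (u₂xx x t) (Icc (0:ℝ) l) x)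
    (hL₁ : ∀ x ∈ Icc (0:ℝ) l, ∀ t ∈ Ioc (0:ℝ) T,
      u₁t x t - (a x * u₁xx x t + a' x * u₁x x t) + q₁ x * u₁ x t = 0)
    (hL₂ : ∀ x ∈ Icc (0:ℝ) l, ∀ t ∈ Ioc (0:ℝ) T,
      u₂t x t - (a x * u₂xx x t + a' x * u₂x x t) + q₂ x * u₂ x t = 0)
    (hinit₁ : ∀ x ∈ Ioo (0:ℝ) l, u₁ x 0 = φ x)
    (hinit₂ : ∀ x ∈ Ioo (0:ℝ) l, u₂ x 0 = φ x)
    (hfinal : ∀ x ∈ Icc (0:ℝ) l, u₁ x T = u₂ x T) :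
    (∀ x ∈ Icc (0:ℝ) l, q₁ x = q₂ x) ∧
    (∀ x ∈ Icc (0:ℝ) l, ∀ t ∈ Icc (0:ℝ) T, u₁ x t = u₂ x t) := by
  -- basic inclusions
  have hsub : Icc (0:ℝ) l ⊆ Ioo (-δ) (l + δ) := fun x hx =>
    ⟨by linarith [hx.1], by linarith [hx.2]⟩
  have hsub' : Icc (0:ℝ) l ⊆ Icc (-δ) (l + δ) := fun x hx =>
    ⟨by linarith [hx.1], by linarith [hx.2]⟩
  have han : ∀ x ∈ Icc (0:ℝ) l, 0 ≤ a x := fun x hx => hanneg x (hsub hx)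
  have hq₁n' : ∀ x ∈ Icc (0:ℝ) l, 0 ≤ q₁ x := fun x hx => hq₁n x (hsub hx)
  have hq₂n' : ∀ x ∈ Icc (0:ℝ) l, 0 ≤ q₂ x := fun x hx => hq₂n x (hsub hx)
  have hq : ∀ x ∈ Icc (0:ℝ) l, q₂ x ≤ q₁ x := fun x hx => hcomp x (hsub hx)
  have h0mem : (0:ℝ) ∈ Icc (0:ℝ) l := ⟨le_refl _, hl.le⟩
  have hlmem : (l:ℝ) ∈ Icc (0:ℝ) l := ⟨hl.le, le_refl _⟩
  -- continuity of coefficients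
  have hac : ContinuousOn a (Icc (0:ℝ) l) := (haW.continuousOn).mono hsub'
  have hq₁c : ContinuousOn q₁ (Icc (0:ℝ) l) := (hq₁W.continuousOn).mono hsub'
  have hq₂c : ContinuousOn q₂ (Icc (0:ℝ) l) := (hq₂W.continuousOn).mono hsub'
  -- a' agrees with deriv a on [0,l]
  have hdiff : ∀ x ∈ Icc (0:ℝ) l, HasDerivAt a (deriv a x) x := by
    intro x hx
    have h1 : DifferentiableOn ℝ a (Icc (-δ) (l+δ)) := haW.differentiableOn (by norm_num)
    have h2 : Icc (-δ) (l+δ) ∈ nhds x :=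
      Icc_mem_nhds (by linarith [hx.1]) (by linarith [hx.2])
    exact (h1.differentiableAt h2).hasDerivAt
  have ha'eq : ∀ x ∈ Icc (0:ℝ) l, a' x = deriv a x := by
    intro x hx
    have h1 := (ha' x hx).derivWithin ((uniqueDiffOn_Icc hl) x hx)
    have h2 := ((hdiff x hx).hasDerivWithinAt (s := Icc (0:ℝ) l)).derivWithin
      ((uniqueDiffOn_Icc hl) x hx)
    rw [← h1, ← h2]
  have hderivc : ContinuousOn (deriv a) (Ioo (-δ) (l+δ)) :=
    (haW.mono Ioo_subset_Icc_self).continuousOn_deriv_of_isOpen isOpen_Ioo (by norm_num)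
  have ha'c : ContinuousOn a' (Icc (0:ℝ) l) :=
    ContinuousOn.congr (hderivc.mono hsub) ha'eq
  -- a'(0) = a'(l) = 0
  have ha'0 : a' 0 = 0 := by
    have hmin : IsLocalMin a 0 := by
      filter_upwards [(Ioo_mem_nhds (by linarith) (by linarith) :
        Ioo (-δ) (l+δ) ∈ nhds (0:ℝ))] with x hx
      rw [ha0]; exact hanneg x hx
    rw [ha'eq 0 h0mem, hmin.deriv_eq_zero]
  have ha'l : a' l = 0 := by
    have hmin : IsLocalMin a l := by
      filter_upwards [(Ioo_mem_nhds (by linarith) (by linarith) :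
        Ioo (-δ) (l+δ) ∈ nhds (l:ℝ))] with x hx
      rw [hal]; exact hanneg x hx
    rw [ha'eq l hlmem, hmin.deriv_eq_zero]
  -- bounds on coefficients
  obtain ⟨A, hA⟩ : ∃ A, ∀ x ∈ Icc (0:ℝ) l, a x ≤ A := by
    obtain ⟨C, hC⟩ := isCompact_Icc.exists_bound_of_continuousOn hac
    exact ⟨C, fun x hx => (le_abs_self _).trans (by simpa using hC x hx)⟩
  obtain ⟨A', hA'⟩ : ∃ A', ∀ x ∈ Icc (0:ℝ) l, |a' x| ≤ A' := by
    obtain ⟨C, hC⟩ := isCompact_Icc.exists_bound_of_continuousOn ha'c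
    exact ⟨C, fun x hx => by simpa using hC x hx⟩
  obtain ⟨Qb, hQb⟩ : ∃ Qb, ∀ x ∈ Icc (0:ℝ) l, q₁ x ≤ Qb := by
    obtain ⟨C, hC⟩ := isCompact_Icc.exists_bound_of_continuousOn hq₁c
    exact ⟨C, fun x hx => (le_abs_self _).trans (by simpa using hC x hx)⟩
  -- continuity of the solutions
  have hu₁c : ContinuousOn (fun p : ℝ × ℝ => u₁ p.1 p.2) (Icc (0:ℝ) l ×ˢ Icc (0:ℝ) T) :=
    hu₁W.continuousOn
  have hu₂c : ContinuousOn (fun p : ℝ × ℝ => u₂ p.1 p.2) (Icc (0:ℝ) l ×ˢ Icc (0:ℝ) T) :=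
    hu₂W.continuousOn
  have hslice : ∀ (v : ℝ → ℝ → ℝ),
      ContinuousOn (fun p : ℝ × ℝ => v p.1 p.2) (Icc (0:ℝ) l ×ˢ Icc (0:ℝ) T) →
      ∀ t ∈ Icc (0:ℝ) T, ContinuousOn (fun x => v x t) (Icc (0:ℝ) l) := by
    intro v hv t ht
    have h1 : ContinuousOn (fun x : ℝ => ((x, t) : ℝ × ℝ)) (Icc (0:ℝ) l) :=
      (continuous_id.prodMk continuous_const).continuousOn
    exact hv.comp h1 (fun x hx => ⟨hx, ht⟩)
  have h0T : (0:ℝ) ∈ Icc (0:ℝ) T := ⟨le_refl _, hT.le⟩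
  have hTT : (T:ℝ) ∈ Icc (0:ℝ) T := ⟨hT.le, le_refl _⟩
  have hTIoc : (T:ℝ) ∈ Ioc (0:ℝ) T := ⟨hT, le_refl _⟩
  -- Step 2 : u₁ ≥ 0 and u₂ ≥ 0 on the rectangle
  have hposgen : ∀ (v vt vx vxx : ℝ → ℝ → ℝ) (qq : ℝ → ℝ),
      (∀ x ∈ Icc (0:ℝ) l, 0 ≤ qq x) →
      ContinuousOn (fun p : ℝ × ℝ => v p.1 p.2) (Icc (0:ℝ) l ×ˢ Icc (0:ℝ) T) →
      (∀ x ∈ Icc (0:ℝ) l, ∀ t ∈ Ioc (0:ℝ) T,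
        HasDerivWithinAt (fun τ => v x τ) (vt x t) (Icc (0:ℝ) T) t) →
      (∀ x ∈ Icc (0:ℝ) l, ∀ t ∈ Ioc (0:ℝ) T,
        HasDerivWithinAt (fun s => v s t) (vx x t) (Icc (0:ℝ) l) x) →
      (∀ x ∈ Icc (0:ℝ) l, ∀ t ∈ Ioc (0:ℝ) T,
        HasDerivWithinAt (fun s => vx s t) (vxx x t) (Icc (0:ℝ) l) x) →
      (∀ x ∈ Icc (0:ℝ) l, ∀ t ∈ Ioc (0:ℝ) T,
        vt x t - (a x * vxx x t + a' x * vx x t) + qq x * v x t = 0) →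
      (∀ x ∈ Ioo (0:ℝ) l, v x 0 = φ x) →
      ∀ x ∈ Icc (0:ℝ) l, ∀ t ∈ Icc (0:ℝ) T, 0 ≤ v x t := by
    intro v vt vx vxx qq hqqn hvc hvt hvx hvxx hLv hvinit
    have hinit' : ∀ x ∈ Icc (0:ℝ) l, -v x 0 ≤ 0 := by
      have h1 : ∀ x ∈ Icc (0:ℝ) l, 0 ≤ v x 0 := by
        apply aux_nonneg_closure hl (hslice v hvc 0 h0T)
        intro x hx
        rw [hvinit x hx]
        exact hφn x hx
      intro x hx
      linarith [h1 x hx]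
    have hres := aux_max_principle l T hl hT a a' qq han ha0 hal ha'0 ha'l hqqn
      (fun x t => -v x t) (fun x t => -vt x t) (fun x t => -vx x t) (fun x t => -vxx x t)
      hvc.neg
      (fun x hx t ht => (hvt x hx t ht).neg)
      (fun x hx t ht => (hvx x hx t ht).neg)
      (fun x hx t ht => (hvxx x hx t ht).neg)
      (fun x hx t ht => by
        show -vt x t - (a x * -vxx x t + a' x * -vx x t) + qq x * -v x t ≤ 0
        have h := hLv x hx t ht
        nlinarith [h])
      hinit'
    intro x hx t ht
    have h := hres x hx t ht
    linarith
  have hu₁pos : ∀ x ∈ Icc (0:ℝ) l, ∀ t ∈ Icc (0:ℝ) T, 0 ≤ u₁ x t :=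
    hposgen u₁ u₁t u₁x u₁xx q₁ hq₁n' hu₁c hu₁t hu₁x hu₁xx hL₁ hinit₁
  have hu₂pos : ∀ x ∈ Icc (0:ℝ) l, ∀ t ∈ Icc (0:ℝ) T, 0 ≤ u₂ x t :=
    hposgen u₂ u₂t u₂x u₂xx q₂ hq₂n' hu₂c hu₂t hu₂x hu₂xx hL₂ hinit₂
  -- Step 3 : comparison u₁ ≤ u₂
  have hu₁leu₂ : ∀ x ∈ Icc (0:ℝ) l, ∀ t ∈ Icc (0:ℝ) T, u₁ x t ≤ u₂ x t := by
    have hinit' : ∀ x ∈ Icc (0:ℝ) l, u₁ x 0 - u₂ x 0 ≤ 0 := by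
      have h1 : ∀ x ∈ Icc (0:ℝ) l, 0 ≤ u₂ x 0 - u₁ x 0 := by
        apply aux_nonneg_closure hl
          (((hslice u₂ hu₂c 0 h0T)).sub (hslice u₁ hu₁c 0 h0T))
        intro x hx
        show 0 ≤ u₂ x 0 - u₁ x 0
        rw [hinit₁ x hx, hinit₂ x hx]
        simp
      intro x hx
      linarith [h1 x hx]
    have hres := aux_max_principle l T hl hT a a' q₂ han ha0 hal ha'0 ha'l hq₂n'
      (fun x t => u₁ x t - u₂ x t) (fun x t => u₁t x t - u₂t x t)
      (fun x t => u₁x x t - u₂x x t) (fun x t => u₁xx x t - u₂xx x t)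
      (hu₁c.sub hu₂c)
      (fun x hx t ht => (hu₁t x hx t ht).sub (hu₂t x hx t ht))
      (fun x hx t ht => (hu₁x x hx t ht).sub (hu₂x x hx t ht))
      (fun x hx t ht => (hu₁xx x hx t ht).sub (hu₂xx x hx t ht))
      (fun x hx t ht => by
        show (u₁t x t - u₂t x t) - (a x * (u₁xx x t - u₂xx x t) + a' x * (u₁x x t - u₂x x t))
          + q₂ x * (u₁ x t - u₂ x t) ≤ 0
        have h1 := hL₁ x hx t ht
        have h2 := hL₂ x hx t ht
        have h3 : 0 ≤ (q₁ x - q₂ x) * u₁ x t :=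
          mul_nonneg (by linarith [hq x hx]) (hu₁pos x hx t ⟨ht.1.le, ht.2⟩)
        nlinarith [h1, h2, h3])
      hinit'
    intro x hx t ht
    have h := hres x hx t ht
    linarith
  -- Step 4/5 : at t = T
  have hxall : ∀ x ∈ Icc (0:ℝ) l, u₁x x T = u₂x x T := by
    intro x hx
    have h1 := hu₁x x hx T hTIoc
    have h2 := (hu₂x x hx T hTIoc).congr (fun s hs => hfinal s hs) (hfinal x hx)
    have e1 := h1.derivWithin ((uniqueDiffOn_Icc hl) x hx)
    have e2 := h2.derivWithin ((uniqueDiffOn_Icc hl) x hx)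
    rw [← e1, ← e2]
  have hxxall : ∀ x ∈ Icc (0:ℝ) l, u₁xx x T = u₂xx x T := by
    intro x hx
    have h1 := hu₁xx x hx T hTIoc
    have h2 := (hu₂xx x hx T hTIoc).congr (fun s hs => hxall s hs) (hxall x hx)
    have e1 := h1.derivWithin ((uniqueDiffOn_Icc hl) x hx)
    have e2 := h2.derivWithin ((uniqueDiffOn_Icc hl) x hx)
    rw [← e1, ← e2]
  have hprod0 : ∀ x ∈ Icc (0:ℝ) l, (q₁ x - q₂ x) * u₁ x T = 0 := by
    intro x hx
    have h1 := hL₁ x hx T hTIoc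
    have h2 := hL₂ x hx T hTIoc
    have hf := hfinal x hx
    have hx1 := hxall x hx
    have hx2 := hxxall x hx
    have hder : HasDerivWithinAt (fun t => u₂ x t - u₁ x t) (u₂t x T - u₁t x T)
        (Icc (0:ℝ) T) T :=
      (hu₂t x hx T hTIoc).sub (hu₁t x hx T hTIoc)
    have hsign : u₂t x T - u₁t x T ≤ 0 := by
      apply aux_deriv_nonpos_right_min hT hder
      intro t ht
      show u₂ x T - u₁ x T ≤ u₂ x t - u₁ x t
      have h3 := hu₁leu₂ x hx t ht
      linarith
    have heq : u₂t x T - u₁t x T = (q₁ x - q₂ x) * u₁ x T := by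
      rw [hx1, hx2, hf] at h1
      rw [hf]
      linear_combination h2 - h1
    have hge : 0 ≤ (q₁ x - q₂ x) * u₁ x T :=
      mul_nonneg (by linarith [hq x hx]) (hu₁pos x hx T hTT)
    linarith [heq, hsign, hge]
  -- Step 6 : positivity of u₁(·,T) inside (0,l)
  obtain ⟨x1, hx1mem, hx1ne⟩ := hφne
  have hφx1 : 0 < φ x1 := lt_of_le_of_ne (hφn x1 hx1mem) (Ne.symm hx1ne)
  have hφcont : ContinuousAt φ x1 := by
    have h1 : Icc (-δ) (l+δ) ∈ nhds x1 :=
      Icc_mem_nhds (by linarith [hx1mem.1]) (by linarith [hx1mem.2])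
    exact (hφW.continuousOn x1 (hsub' ⟨hx1mem.1.le, hx1mem.2.le⟩)).continuousAt h1
  obtain ⟨r, hr, hball⟩ : ∃ r > 0, ∀ y, |y - x1| < r → φ x1 / 2 < φ y := by
    have hev : ∀ᶠ y in nhds x1, φ x1 / 2 < φ y :=
      hφcont.eventually (lt_mem_nhds (by linarith))
    rw [Metric.eventually_nhds_iff] at hev
    obtain ⟨ε, hε, h⟩ := hev
    exact ⟨ε, hε, fun y hy => h (by simpa [Real.dist_eq] using hy)⟩
  have hUpos : ∀ x0 ∈ Ioo (0:ℝ) l, 0 < u₁ x0 T := by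
    intro x0 hx0
    have hminpos : 0 < min x0 x1 := lt_min hx0.1 hx1mem.1
    have hmaxlt : max x0 x1 < l := max_lt hx0.2 hx1mem.2
    obtain ⟨ρ, hρprops⟩ : ∃ ρ : ℝ, ρ = min (min x0 x1 / 2) (min ((l - max x0 x1)/2) (r/2)) :=
      ⟨_, rfl⟩
    have hρ : 0 < ρ := by
      rw [hρprops]
      exact lt_min (by linarith)
        (lt_min (by linarith) (by linarith))
    have hρ1 : ρ ≤ min x0 x1 / 2 := hρprops ▸ min_le_left _ _
    have hρ2 : ρ ≤ (l - max x0 x1)/2 := hρprops ▸ (min_le_right _ _).trans (min_le_left _ _)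
    have hρ3 : ρ ≤ r/2 := hρprops ▸ (min_le_right _ _).trans (min_le_right _ _)
    have hJ : Icc (min x0 x1 - ρ) (max x0 x1 + ρ) ⊆ Ioo (0:ℝ) l := by
      intro s hs
      exact ⟨by linarith [hs.1], by linarith [hs.2]⟩
    have hJne : (min x0 x1 - ρ) ≤ (max x0 x1 + ρ) := by
      have := min_le_max (a := x0) (b := x1)
      linarith
    have hJcl : Icc (min x0 x1 - ρ) (max x0 x1 + ρ) ⊆ Icc (0:ℝ) l := fun s hs =>
      ⟨(hJ hs).1.le, (hJ hs).2.le⟩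
    obtain ⟨xm, hxm, hxmin⟩ :=
      isCompact_Icc.exists_isMinOn (nonempty_Icc.2 hJne) (hac.mono hJcl)
    have hm₀ : 0 < a xm := hapos xm (hJ hxm)
    have hminx1 : min x0 x1 ≤ x1 := min_le_right _ _
    have hmaxx1 : x1 ≤ max x0 x1 := le_max_right _ _
    have hinitc : ∀ y ∈ Icc (x1 - ρ) (x1 + ρ), φ x1 / 2 ≤ u₁ y 0 := by
      intro y hy
      have hy1 : |y - x1| < r := by
        rw [abs_lt]
        constructor <;> [linarith [hy.1]; linarith [hy.2]]
      have hyIoo : y ∈ Ioo (0:ℝ) l :=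
        ⟨by linarith [hy.1], by linarith [hy.2]⟩
      rw [hinit₁ y hyIoo]
      exact (hball y hy1).le
    exact aux_bump l T hl hT a a' q₁ A A' Qb (a xm) hA hA' hQb hq₁n'
      x0 x1 ρ (φ x1/2) hx0 hx1mem hρ (by linarith) hm₀ hJ
      (fun s hs => hxmin hs)
      u₁ u₁t u₁x u₁xx hu₁c hu₁t hu₁x hu₁xx hL₁ hu₁pos hinitc
  -- Step 6b : q₁ = q₂ on [0,l]
  have hqeq : ∀ x ∈ Icc (0:ℝ) l, q₁ x = q₂ x := by
    have hIoo : ∀ x ∈ Ioo (0:ℝ) l, q₁ x = q₂ x := by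
      intro x hx
      have h1 := hprod0 x ⟨hx.1.le, hx.2.le⟩
      have h2 := hUpos x hx
      rcases mul_eq_zero.1 h1 with h | h
      · linarith
      · linarith
    intro x hx
    have h3 : 0 ≤ q₂ x - q₁ x := aux_nonneg_closure hl (hq₂c.sub hq₁c)
      (fun y hy => by show 0 ≤ q₂ y - q₁ y; rw [hIoo y hy]; simp) x hx
    have h4 := hq x hx
    linarith
  -- Step 7 : u₂ ≤ u₁, hence equality
  have hu₂leu₁ : ∀ x ∈ Icc (0:ℝ) l, ∀ t ∈ Icc (0:ℝ) T, u₂ x t ≤ u₁ x t := by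
    have hinit' : ∀ x ∈ Icc (0:ℝ) l, u₂ x 0 - u₁ x 0 ≤ 0 := by
      have h1 : ∀ x ∈ Icc (0:ℝ) l, 0 ≤ u₁ x 0 - u₂ x 0 := by
        apply aux_nonneg_closure hl ((hslice u₁ hu₁c 0 h0T).sub (hslice u₂ hu₂c 0 h0T))
        intro x hx
        show 0 ≤ u₁ x 0 - u₂ x 0
        rw [hinit₁ x hx, hinit₂ x hx]
        simp
      intro x hx
      linarith [h1 x hx]
    have hres := aux_max_principle l T hl hT a a' q₁ han ha0 hal ha'0 ha'l hq₁n'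
      (fun x t => u₂ x t - u₁ x t) (fun x t => u₂t x t - u₁t x t)
      (fun x t => u₂x x t - u₁x x t) (fun x t => u₂xx x t - u₁xx x t)
      (hu₂c.sub hu₁c)
      (fun x hx t ht => (hu₂t x hx t ht).sub (hu₁t x hx t ht))
      (fun x hx t ht => (hu₂x x hx t ht).sub (hu₁x x hx t ht))
      (fun x hx t ht => (hu₂xx x hx t ht).sub (hu₁xx x hx t ht))
      (fun x hx t ht => by
        show (u₂t x t - u₁t x t) - (a x * (u₂xx x t - u₁xx x t) + a' x * (u₂x x t - u₁x x t))
          + q₁ x * (u₂ x t - u₁ x t) ≤ 0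
        have h1 := hL₁ x hx t ht
        have h2 := hL₂ x hx t ht
        have he : q₁ x * u₂ x t = q₂ x * u₂ x t := by rw [hqeq x hx]
        nlinarith [h1, h2, he])
      hinit'
    intro x hx t ht
    have h := hres x hx t ht
    linarith
  exact ⟨hqeq, fun x hx t ht => le_antisymm (hu₁leu₂ x hx t ht) (hu₂leu₁ x hx t ht)⟩

/-- Uniqueness for the inverse radiative coefficient problem (Theorem 2.5, in comparable
pairs).  Sobolev regularity `W^{k,∞}` on the interval `G_δ = (−δ, l+δ)` (resp. on the
cylinder `Q̄`) is rendered as `ContDiffOn ℝ k` on the closed interval `[−δ, l+δ]` (resp. on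
`[0,l] × [0,T]`), where all derivatives are automatically bounded by compactness.
If the comparable coefficients `q₁, q₂` produce solutions with the same final data at time
`T`, then `q₁ = q₂` on `[0,l]` and `u₁ = u₂` on `Q̄`. -/
theorem inverse_problem_uniqueness
    (l T δ : ℝ) (hl : 0 < l) (hT : 0 < T) (hδ : 0 < δ)
    (a a' φ q₁ q₂ : ℝ → ℝ)
    (haW : ContDiffOn ℝ 4 a (Icc (-δ) (l + δ)))
    (hanneg : ∀ x ∈ Ioo (-δ) (l + δ), 0 ≤ a x)
    (ha0 : a 0 = 0) (hal : a l = 0)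
    (hapos : ∀ x ∈ Ioo (0:ℝ) l, 0 < a x)
    (ha' : ∀ x ∈ Icc (0:ℝ) l, HasDerivWithinAt a (a' x) (Icc (0:ℝ) l) x)
    (hφW : ContDiffOn ℝ 5 φ (Icc (-δ) (l + δ)))
    (hφn : ∀ x ∈ Ioo (0:ℝ) l, 0 ≤ φ x)
    (hφne : ∃ x ∈ Ioo (0:ℝ) l, φ x ≠ 0)
    (hq₁W : ContDiffOn ℝ 3 q₁ (Icc (-δ) (l + δ)))
    (hq₂W : ContDiffOn ℝ 3 q₂ (Icc (-δ) (l + δ)))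
    (hq₁n : ∀ x ∈ Ioo (-δ) (l + δ), 0 ≤ q₁ x)
    (hq₂n : ∀ x ∈ Ioo (-δ) (l + δ), 0 ≤ q₂ x)
    (hcomp : (∀ x ∈ Ioo (-δ) (l + δ), q₂ x ≤ q₁ x) ∨ (∀ x ∈ Ioo (-δ) (l + δ), q₁ x ≤ q₂ x))
    (u₁ u₁t u₁x u₁xx u₂ u₂t u₂x u₂xx : ℝ → ℝ → ℝ)
    (hu₁W : ContDiffOn ℝ 3 (fun p : ℝ × ℝ => u₁ p.1 p.2) (Icc (0:ℝ) l ×ˢ Icc (0:ℝ) T))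
    (hu₂W : ContDiffOn ℝ 3 (fun p : ℝ × ℝ => u₂ p.1 p.2) (Icc (0:ℝ) l ×ˢ Icc (0:ℝ) T))
    (hu₁t : ∀ x ∈ Icc (0:ℝ) l, ∀ t ∈ Ioc (0:ℝ) T,
      HasDerivWithinAt (fun τ => u₁ x τ) (u₁t x t) (Icc (0:ℝ) T) t)
    (hu₁x : ∀ x ∈ Icc (0:ℝ) l, ∀ t ∈ Ioc (0:ℝ) T,
      HasDerivWithinAt (fun s => u₁ s t) (u₁x x t) (Icc (0:ℝ) l) x)
    (hu₁xx : ∀ x ∈ Icc (0:ℝ) l, ∀ t ∈ Ioc (0:ℝ) T,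
      HasDerivWithinAt (fun s => u₁x s t) (u₁xx x t) (Icc (0:ℝ) l) x)
    (hu₂t : ∀ x ∈ Icc (0:ℝ) l, ∀ t ∈ Ioc (0:ℝ) T,
      HasDerivWithinAt (fun τ => u₂ x τ) (u₂t x t) (Icc (0:ℝ) T) t)
    (hu₂x : ∀ x ∈ Icc (0:ℝ) l, ∀ t ∈ Ioc (0:ℝ) T,
      HasDerivWithinAt (fun s => u₂ s t) (u₂x x t) (Icc (0:ℝ) l) x)
    (hu₂xx : ∀ x ∈ Icc (0:ℝ) l, ∀ t ∈ Ioc (0:ℝ) T,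
      HasDerivWithinAt (fun s => u₂x s t) (u₂xx x t) (Icc (0:ℝ) l) x)
    (hL₁ : ∀ x ∈ Icc (0:ℝ) l, ∀ t ∈ Ioc (0:ℝ) T,
      u₁t x t - (a x * u₁xx x t + a' x * u₁x x t) + q₁ x * u₁ x t = 0)
    (hL₂ : ∀ x ∈ Icc (0:ℝ) l, ∀ t ∈ Ioc (0:ℝ) T,
      u₂t x t - (a x * u₂xx x t + a' x * u₂x x t) + q₂ x * u₂ x t = 0)
    (hinit₁ : ∀ x ∈ Ioo (0:ℝ) l, u₁ x 0 = φ x)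
    (hinit₂ : ∀ x ∈ Ioo (0:ℝ) l, u₂ x 0 = φ x)
    (hfinal : ∀ x ∈ Icc (0:ℝ) l, u₁ x T = u₂ x T) :
    (∀ x ∈ Icc (0:ℝ) l, q₁ x = q₂ x) ∧
    (∀ x ∈ Icc (0:ℝ) l, ∀ t ∈ Icc (0:ℝ) T, u₁ x t = u₂ x t) := by
  
  rcases hcomp with hc | hc
  · exact aux_key l T δ hl hT hδ a a' φ q₁ q₂ haW hanneg ha0 hal hapos ha' hφW hφn hφne
      hq₁W hq₂W hq₁n hq₂n hc u₁ u₁t u₁x u₁xx u₂ u₂t u₂x u₂xx hu₁W hu₂W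
      hu₁t hu₁x hu₁xx hu₂t hu₂x hu₂xx hL₁ hL₂ hinit₁ hinit₂ hfinal
  · obtain ⟨hqr, hur⟩ := aux_key l T δ hl hT hδ a a' φ q₂ q₁ haW hanneg ha0 hal hapos ha'
      hφW hφn hφne hq₂W hq₁W hq₂n hq₁n hc u₂ u₂t u₂x u₂xx u₁ u₁t u₁x u₁xx hu₂W hu₁W
      hu₂t hu₂x hu₂xx hu₁t hu₁x hu₁xx hL₂ hL₁ hinit₂ hinit₁
      (fun x hx => (hfinal x hx).symm)
    exact ⟨fun x hx => (hqr x hx).symm, fun x hx t ht => (hur x hx t ht).symm⟩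
end

section
/- Energy estimate for the regularized non-degenerate problem (estimate in proof of Theorem 3.1): Let ε ∈ (0,1) and a_ε(x) = a(x) + ε. Let q : [0,l] → ℝ be continuous with q ≥ 0, f : Q̄ → ℝ continuous, and φ : [0,l] → ℝ continuous with φ(0) = φ(l) = 0. Let u be continuous on Q̄ = [0,l] × [0,T] with u_t, u_x, u_{xx} continuous on Q̄, satisfying u_t − (a_ε(x)u_x)_x + q(x)u = f(x,t) on Q̄, u(0,t) = u(l,t) = 0 for t ∈ [0,T], and u(x,0) = φ(x) for x ∈ [0,l]. Then there is a constant C > 0 depending only on T (in particular independent of ε, f, φ, u) such that max_{0≤t≤T} ∫₀^l u(x,t)² dx + ∫₀^T∫₀^l a_ε(x) u_x(x,t)² dx dt ≤ C ( ∫₀^l φ(x)² dx + ∫₀^T∫₀^l f(x,t)² dx dt ). -/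
open Set MeasureTheory

section helpers

variable {l T : ℝ}

/-- slice in x -/
lemma sliceX {G : ℝ → ℝ → ℝ}
    (h : ContinuousOn (fun p : ℝ × ℝ => G p.1 p.2) (Icc (0:ℝ) l ×ˢ Icc (0:ℝ) T))
    {t : ℝ} (ht : t ∈ Icc (0:ℝ) T) :
    ContinuousOn (fun x => G x t) (Icc (0:ℝ) l) := by
  have : ContinuousOn (fun x : ℝ => ((x, t) : ℝ × ℝ)) (Icc (0:ℝ) l) :=
    (continuous_id.prodMk continuous_const).continuousOn
  exact h.comp this (fun x hx => ⟨hx, ht⟩)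

/-- slice in t -/
lemma sliceT {G : ℝ → ℝ → ℝ}
    (h : ContinuousOn (fun p : ℝ × ℝ => G p.1 p.2) (Icc (0:ℝ) l ×ˢ Icc (0:ℝ) T))
    {x : ℝ} (hx : x ∈ Icc (0:ℝ) l) :
    ContinuousOn (fun t => G x t) (Icc (0:ℝ) T) := by
  have : ContinuousOn (fun t : ℝ => ((x, t) : ℝ × ℝ)) (Icc (0:ℝ) T) :=
    (continuous_const.prodMk continuous_id).continuousOn
  exact h.comp this (fun t ht => ⟨hx, ht⟩)

/-- continuity of a parametric interval integral -/
lemma paramCont (hl : (0:ℝ) ≤ l) {G : ℝ → ℝ → ℝ}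
    (h : ContinuousOn (fun p : ℝ × ℝ => G p.1 p.2) (Icc (0:ℝ) l ×ˢ Icc (0:ℝ) T)) :
    ContinuousOn (fun t => ∫ x in (0:ℝ)..l, G x t) (Icc (0:ℝ) T) := by
  obtain ⟨M, hM⟩ := (isCompact_Icc.prod isCompact_Icc).exists_bound_of_continuousOn h
  intro t₀ ht₀
  apply intervalIntegral.continuousWithinAt_of_dominated_interval
      (bound := fun _ => M)
  · filter_upwards [eventually_mem_nhdsWithin] with t ht
    exact ((sliceX h ht).aestronglyMeasurable measurableSet_Icc).mono_measure
      (Measure.restrict_mono (by rw [uIoc_of_le hl]; exact Ioc_subset_Icc_self) le_rfl)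
  · filter_upwards [eventually_mem_nhdsWithin] with t ht
    filter_upwards with x hx
    have hx' : x ∈ Icc (0:ℝ) l := by
      rw [uIoc_of_le hl] at hx; exact Ioc_subset_Icc_self hx
    exact hM (x, t) ⟨hx', ht⟩
  · exact intervalIntegrable_const
  · filter_upwards with x hx
    have hx' : x ∈ Icc (0:ℝ) l := by
      rw [uIoc_of_le hl] at hx; exact Ioc_subset_Icc_self hx
    exact sliceT h hx' t₀ ht₀

/-- Fubini swap for interval integrals over a rectangle -/
lemma swapInt {t : ℝ} (hl : (0:ℝ) ≤ l) (ht : (0:ℝ) ≤ t) {G : ℝ → ℝ → ℝ}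
    (hG : IntegrableOn (fun p : ℝ × ℝ => G p.1 p.2) (Icc (0:ℝ) l ×ˢ Icc (0:ℝ) t)) :
    ∫ x in (0:ℝ)..l, ∫ s in (0:ℝ)..t, G x s = ∫ s in (0:ℝ)..t, ∫ x in (0:ℝ)..l, G x s := by
  rw [intervalIntegral.integral_of_le hl, intervalIntegral.integral_of_le ht]
  simp_rw [intervalIntegral.integral_of_le hl, intervalIntegral.integral_of_le ht]
  apply MeasureTheory.integral_integral_swap
  have : IntegrableOn (fun p : ℝ × ℝ => G p.1 p.2) (Ioc (0:ℝ) l ×ˢ Ioc (0:ℝ) t) :=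
    hG.mono_set (prod_mono Ioc_subset_Icc_self Ioc_subset_Icc_self)
  rw [Measure.prod_restrict, ← Measure.volume_eq_prod]
  exact this

end helpers




set_option maxHeartbeats 2000000 in
/-- Energy estimate for the regularized non-degenerate problem (proof of Theorem 3.1):
there is a constant `C > 0` depending only on `T` (independent of `ε`, `f`, `φ`, `q`, `u`)
such that any classical solution of the regularized initial-boundary value problem satisfies
`max_{0≤t≤T} ∫₀^l u² dx + ∫₀^T∫₀^l a_ε uₓ² dx dt ≤ C (∫₀^l φ² dx + ∫₀^T∫₀^l f² dx dt)`. -/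
theorem regularized_energy_estimate
    (l T : ℝ) (hl : 0 < l) (hT : 0 < T)
    (a a' : ℝ → ℝ)
    (ha : ∀ x ∈ Icc (0:ℝ) l, HasDerivWithinAt a (a' x) (Icc (0:ℝ) l) x)
    (ha'c : ContinuousOn a' (Icc (0:ℝ) l))
    (ha0 : a 0 = 0) (hal : a l = 0)
    (hapos : ∀ x ∈ Ioo (0:ℝ) l, 0 < a x) :
    ∃ C > 0, ∀ ε ∈ Ioo (0:ℝ) 1, ∀ (q : ℝ → ℝ) (f : ℝ → ℝ → ℝ) (φ : ℝ → ℝ)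
      (u ut ux uxx : ℝ → ℝ → ℝ),
      ContinuousOn q (Icc (0:ℝ) l) → (∀ x ∈ Icc (0:ℝ) l, 0 ≤ q x) →
      ContinuousOn (fun p : ℝ × ℝ => f p.1 p.2) (Icc (0:ℝ) l ×ˢ Icc (0:ℝ) T) →
      ContinuousOn φ (Icc (0:ℝ) l) → φ 0 = 0 → φ l = 0 →
      ContinuousOn (fun p : ℝ × ℝ => u p.1 p.2) (Icc (0:ℝ) l ×ˢ Icc (0:ℝ) T) →
      ContinuousOn (fun p : ℝ × ℝ => ut p.1 p.2) (Icc (0:ℝ) l ×ˢ Icc (0:ℝ) T) →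
      ContinuousOn (fun p : ℝ × ℝ => ux p.1 p.2) (Icc (0:ℝ) l ×ˢ Icc (0:ℝ) T) →
      ContinuousOn (fun p : ℝ × ℝ => uxx p.1 p.2) (Icc (0:ℝ) l ×ˢ Icc (0:ℝ) T) →
      (∀ x ∈ Icc (0:ℝ) l, ∀ t ∈ Icc (0:ℝ) T,
        HasDerivWithinAt (fun τ => u x τ) (ut x t) (Icc (0:ℝ) T) t) →
      (∀ x ∈ Icc (0:ℝ) l, ∀ t ∈ Icc (0:ℝ) T,
        HasDerivWithinAt (fun s => u s t) (ux x t) (Icc (0:ℝ) l) x) →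
      (∀ x ∈ Icc (0:ℝ) l, ∀ t ∈ Icc (0:ℝ) T,
        HasDerivWithinAt (fun s => ux s t) (uxx x t) (Icc (0:ℝ) l) x) →
      (∀ x ∈ Icc (0:ℝ) l, ∀ t ∈ Icc (0:ℝ) T,
        ut x t - ((a x + ε) * uxx x t + a' x * ux x t) + q x * u x t = f x t) →
      (∀ t ∈ Icc (0:ℝ) T, u 0 t = 0 ∧ u l t = 0) →
      (∀ x ∈ Icc (0:ℝ) l, u x 0 = φ x) →
      ∀ t ∈ Icc (0:ℝ) T,
        (∫ x in (0:ℝ)..l, (u x t) ^ 2) +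
          (∫ s in (0:ℝ)..T, ∫ x in (0:ℝ)..l, (a x + ε) * (ux x s) ^ 2)
        ≤ C * ((∫ x in (0:ℝ)..l, (φ x) ^ 2) +
            ∫ s in (0:ℝ)..T, ∫ x in (0:ℝ)..l, (f x s) ^ 2) := by
  refine ⟨(1 + T) * Real.exp T + 1, by positivity, ?_⟩
  rintro ε ⟨hε0, hε1⟩ q f φ u ut ux uxx hqc hq0 hfc hφc hφ0 hφl huc hutc huxc huxxc
    hdu hdx hdxx hpde hbc hic t htmem
  have hl' : (0:ℝ) ≤ l := hl.le
  have hT' : (0:ℝ) ≤ T := hT.le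
  have hac : ContinuousOn a (Icc (0:ℝ) l) := fun x hx => (ha x hx).continuousWithinAt
  have hann : ∀ x ∈ Icc (0:ℝ) l, 0 ≤ a x := by
    intro x hx
    rcases eq_or_lt_of_le hx.1 with h | h
    · rw [← h, ha0]
    rcases eq_or_lt_of_le hx.2 with h2 | h2
    · rw [h2, hal]
    · exact (hapos x ⟨h, h2⟩).le
  -- continuity of the various integrands on the rectangle
  have caP : ContinuousOn (fun p : ℝ × ℝ => a p.1) (Icc (0:ℝ) l ×ˢ Icc (0:ℝ) T) :=
    hac.comp continuous_fst.continuousOn (fun p hp => hp.1)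
  have ca'P : ContinuousOn (fun p : ℝ × ℝ => a' p.1) (Icc (0:ℝ) l ×ˢ Icc (0:ℝ) T) :=
    ha'c.comp continuous_fst.continuousOn (fun p hp => hp.1)
  have cqP : ContinuousOn (fun p : ℝ × ℝ => q p.1) (Icc (0:ℝ) l ×ˢ Icc (0:ℝ) T) :=
    hqc.comp continuous_fst.continuousOn (fun p hp => hp.1)
  have c1 : ContinuousOn (fun p : ℝ × ℝ => 2 * u p.1 p.2 * ut p.1 p.2)
      (Icc (0:ℝ) l ×ˢ Icc (0:ℝ) T) := (continuousOn_const.mul huc).mul hutc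
  have c2 : ContinuousOn (fun p : ℝ × ℝ => (a p.1 + ε) * (ux p.1 p.2) ^ 2)
      (Icc (0:ℝ) l ×ˢ Icc (0:ℝ) T) := (caP.add continuousOn_const).mul (huxc.pow 2)
  have c3 : ContinuousOn (fun p : ℝ × ℝ => (f p.1 p.2) ^ 2)
      (Icc (0:ℝ) l ×ˢ Icc (0:ℝ) T) := hfc.pow 2
  have c4 : ContinuousOn (fun p : ℝ × ℝ => (u p.1 p.2) ^ 2)
      (Icc (0:ℝ) l ×ˢ Icc (0:ℝ) T) := huc.pow 2
  have c5 : ContinuousOn (fun p : ℝ × ℝ => q p.1 * (u p.1 p.2) ^ 2)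
      (Icc (0:ℝ) l ×ˢ Icc (0:ℝ) T) := cqP.mul (huc.pow 2)
  have c6 : ContinuousOn (fun p : ℝ × ℝ => 2 * u p.1 p.2 * f p.1 p.2)
      (Icc (0:ℝ) l ×ˢ Icc (0:ℝ) T) := (continuousOn_const.mul huc).mul hfc
  -- the main time-dependent quantities
  set E : ℝ → ℝ := fun τ => ∫ x in (0:ℝ)..l, (u x τ) ^ 2 with hEdef
  set D : ℝ → ℝ := fun τ => ∫ x in (0:ℝ)..l, (a x + ε) * (ux x τ) ^ 2 with hDdef
  set F : ℝ → ℝ := fun τ => ∫ x in (0:ℝ)..l, (f x τ) ^ 2 with hFdef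
  set Qv : ℝ → ℝ := fun τ => ∫ x in (0:ℝ)..l, q x * (u x τ) ^ 2 with hQdef
  set H : ℝ → ℝ := fun τ => ∫ x in (0:ℝ)..l, 2 * u x τ * ut x τ with hHdef
  set RR : ℝ → ℝ := fun τ => ∫ x in (0:ℝ)..l, 2 * u x τ * f x τ with hRdef
  have EC : ContinuousOn E (Icc (0:ℝ) T) := paramCont (G := fun x τ => (u x τ) ^ 2) hl' c4
  have DC : ContinuousOn D (Icc (0:ℝ) T) := paramCont (G := fun x τ => (a x + ε) * (ux x τ) ^ 2) hl' c2
  have FC : ContinuousOn F (Icc (0:ℝ) T) := paramCont (G := fun x τ => (f x τ) ^ 2) hl' c3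
  have QC : ContinuousOn Qv (Icc (0:ℝ) T) := paramCont (G := fun x τ => q x * (u x τ) ^ 2) hl' c5
  have HC : ContinuousOn H (Icc (0:ℝ) T) := paramCont (G := fun x τ => 2 * u x τ * ut x τ) hl' c1
  have RC : ContinuousOn RR (Icc (0:ℝ) T) := paramCont (G := fun x τ => 2 * u x τ * f x τ) hl' c6
  -- integrability helpers
  have intX : ∀ {g : ℝ → ℝ}, ContinuousOn g (Icc (0:ℝ) l) →
      IntervalIntegrable g volume 0 l := by
    intro g hg
    apply ContinuousOn.intervalIntegrable
    rwa [uIcc_of_le hl']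
  have intOn : ∀ {g : ℝ → ℝ}, ContinuousOn g (Icc (0:ℝ) T) → ∀ {τ : ℝ}, τ ∈ Icc (0:ℝ) T →
      IntervalIntegrable g volume 0 τ := by
    intro g hg τ hτ
    apply ContinuousOn.intervalIntegrable
    rw [uIcc_of_le hτ.1]
    exact hg.mono (Icc_subset_Icc le_rfl hτ.2)
  -- nonnegativity
  have Enn : ∀ τ ∈ Icc (0:ℝ) T, 0 ≤ E τ := fun τ _ =>
    intervalIntegral.integral_nonneg hl' (fun x _ => sq_nonneg _)
  have Dnn : ∀ τ ∈ Icc (0:ℝ) T, 0 ≤ D τ := fun τ _ =>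
    intervalIntegral.integral_nonneg hl' (fun x hx =>
      mul_nonneg (add_nonneg (hann x hx) hε0.le) (sq_nonneg _))
  have Fnn : ∀ τ, 0 ≤ F τ := fun τ =>
    intervalIntegral.integral_nonneg hl' (fun x _ => sq_nonneg _)
  have Qnn : ∀ τ ∈ Icc (0:ℝ) T, 0 ≤ Qv τ := fun τ _ =>
    intervalIntegral.integral_nonneg hl' (fun x hx =>
      mul_nonneg (hq0 x hx) (sq_nonneg _))
  -- Step A : E τ = ∫φ² + ∫₀^τ H
  have stepA : ∀ τ ∈ Icc (0:ℝ) T,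
      E τ = (∫ x in (0:ℝ)..l, (φ x) ^ 2) + ∫ s in (0:ℝ)..τ, H s := by
    intro τ hτ
    have ptw : ∀ x ∈ Icc (0:ℝ) l,
        ∫ s in (0:ℝ)..τ, 2 * u x s * ut x s = (u x τ) ^ 2 - (φ x) ^ 2 := by
      intro x hx
      have hc : ContinuousOn (fun s => (u x s) ^ 2) (Icc (0:ℝ) τ) :=
        ((sliceT (G := u) huc hx).mono (Icc_subset_Icc le_rfl hτ.2)).pow 2
      have hder : ∀ s ∈ Ioo (0:ℝ) τ,
          HasDerivWithinAt (fun s => (u x s) ^ 2) (2 * u x s * ut x s) (Ioi s) s := by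
        intro s hs
        have hs' : s ∈ Icc (0:ℝ) T := ⟨hs.1.le, hs.2.le.trans hτ.2⟩
        have h0 := hdu x hx s hs'
        have h1 : HasDerivWithinAt (fun s => (u x s) ^ 2) (2 * u x s * ut x s)
            (Icc (0:ℝ) T) s := by
          have h2 := h0.mul h0
          have e : (fun s => (u x s) ^ 2) = ((fun τ => u x τ) * fun τ => u x τ) := by
            funext y; simp only [Pi.mul_apply]; ring
          rw [e, show 2 * u x s * ut x s = ut x s * u x s + u x s * ut x s by ring]
          exact h2
        exact h1.mono_of_mem_nhdsWithin
          (Icc_mem_nhdsGT_of_mem ⟨hs'.1, lt_of_lt_of_le hs.2 hτ.2⟩)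
      have hint : IntervalIntegrable (fun s => 2 * u x s * ut x s) volume 0 τ :=
        intOn (sliceT (G := fun x τ => 2 * u x τ * ut x τ) c1 hx) hτ
      rw [intervalIntegral.integral_eq_sub_of_hasDeriv_right_of_le hτ.1 hc hder hint,
        hic x hx]
    have e1 : ∫ x in (0:ℝ)..l, (∫ s in (0:ℝ)..τ, 2 * u x s * ut x s)
        = ∫ x in (0:ℝ)..l, ((u x τ) ^ 2 - (φ x) ^ 2) :=
      intervalIntegral.integral_congr (fun x hx => ptw x (by rwa [uIcc_of_le hl'] at hx))
    have e2 : ∫ x in (0:ℝ)..l, ((u x τ) ^ 2 - (φ x) ^ 2)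
        = E τ - ∫ x in (0:ℝ)..l, (φ x) ^ 2 :=
      intervalIntegral.integral_sub (intX (sliceX (G := fun x τ => (u x τ) ^ 2) c4 hτ)) (intX (hφc.pow 2))
    have e3 : ∫ x in (0:ℝ)..l, (∫ s in (0:ℝ)..τ, 2 * u x s * ut x s)
        = ∫ s in (0:ℝ)..τ, H s := by
      apply swapInt (G := fun x s => 2 * u x s * ut x s) hl' hτ.1
      exact (c1.mono (prod_mono subset_rfl (Icc_subset_Icc le_rfl hτ.2))).integrableOn_compact
        (isCompact_Icc.prod isCompact_Icc)
    rw [← e3, e1, e2]; ring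
  -- Step B : H s = -2 D s - 2 Q s + RR s
  have stepB : ∀ s ∈ Icc (0:ℝ) T, H s = -(2 * D s) - 2 * Qv s + RR s := by
    intro s hs
    -- integration by parts
    have ibp : ∫ x in (0:ℝ)..l,
        (2 * ux x s * ((a x + ε) * ux x s)
          + 2 * u x s * (a' x * ux x s + (a x + ε) * uxx x s)) = 0 := by
      have hc : ContinuousOn (fun x => 2 * u x s * ((a x + ε) * ux x s)) (Icc (0:ℝ) l) :=
        (continuousOn_const.mul (sliceX (G := u) huc hs)).mul
          ((hac.add continuousOn_const).mul (sliceX (G := ux) huxc hs))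
      have hder : ∀ x ∈ Ioo (0:ℝ) l,
          HasDerivWithinAt (fun y => 2 * u y s * ((a y + ε) * ux y s))
            (2 * ux x s * ((a x + ε) * ux x s)
              + 2 * u x s * (a' x * ux x s + (a x + ε) * uxx x s)) (Ioi x) x := by
        intro x hx
        have hx' : x ∈ Icc (0:ℝ) l := ⟨hx.1.le, hx.2.le⟩
        have h1 := (hdx x hx' s hs).const_mul 2
        have h2 := ((ha x hx').add_const ε).mul (hdxx x hx' s hs)
        have h3 := h1.mul h2
        have h4 : HasDerivWithinAt (fun y => 2 * u y s * ((a y + ε) * ux y s))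
            (2 * ux x s * ((a x + ε) * ux x s)
              + 2 * u x s * (a' x * ux x s + (a x + ε) * uxx x s)) (Icc (0:ℝ) l) x := h3
        exact h4.mono_of_mem_nhdsWithin (Icc_mem_nhdsGT_of_mem ⟨hx.1.le, hx.2⟩)
      have hint : IntervalIntegrable (fun x =>
          2 * ux x s * ((a x + ε) * ux x s)
            + 2 * u x s * (a' x * ux x s + (a x + ε) * uxx x s)) volume 0 l := by
        apply intX
        exact ((continuousOn_const.mul (sliceX (G := ux) huxc hs)).mul
            ((hac.add continuousOn_const).mul (sliceX (G := ux) huxc hs))).add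
          ((continuousOn_const.mul (sliceX (G := u) huc hs)).mul
            ((ha'c.mul (sliceX (G := ux) huxc hs)).add
              ((hac.add continuousOn_const).mul (sliceX (G := uxx) huxxc hs))))
      rw [intervalIntegral.integral_eq_sub_of_hasDeriv_right_of_le hl' hc hder hint,
        (hbc s hs).1, (hbc s hs).2]
      ring
    -- pointwise rewriting using the PDE
    have ptw : ∀ x ∈ Icc (0:ℝ) l, 2 * u x s * ut x s =
        (2 * ux x s * ((a x + ε) * ux x s)
          + 2 * u x s * (a' x * ux x s + (a x + ε) * uxx x s))
        - 2 * ((a x + ε) * (ux x s) ^ 2) - 2 * (q x * (u x s) ^ 2) + 2 * u x s * f x s := by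
      intro x hx
      have hp := hpde x hx s hs
      linear_combination (2 * u x s) * hp
    have e1 : H s = ∫ x in (0:ℝ)..l,
        ((2 * ux x s * ((a x + ε) * ux x s)
          + 2 * u x s * (a' x * ux x s + (a x + ε) * uxx x s))
        - 2 * ((a x + ε) * (ux x s) ^ 2) - 2 * (q x * (u x s) ^ 2) + 2 * u x s * f x s) :=
      intervalIntegral.integral_congr (fun x hx => ptw x (by rwa [uIcc_of_le hl'] at hx))
    have igd : IntervalIntegrable (fun x =>
        2 * ux x s * ((a x + ε) * ux x s)
          + 2 * u x s * (a' x * ux x s + (a x + ε) * uxx x s)) volume 0 l := by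
      apply intX
      exact ((continuousOn_const.mul (sliceX (G := ux) huxc hs)).mul
          ((hac.add continuousOn_const).mul (sliceX (G := ux) huxc hs))).add
        ((continuousOn_const.mul (sliceX (G := u) huc hs)).mul
          ((ha'c.mul (sliceX (G := ux) huxc hs)).add
            ((hac.add continuousOn_const).mul (sliceX (G := uxx) huxxc hs))))
    have i2 : IntervalIntegrable (fun x => (a x + ε) * (ux x s) ^ 2) volume 0 l :=
      intX (sliceX (G := fun x τ => (a x + ε) * (ux x τ) ^ 2) c2 hs)
    have i5 : IntervalIntegrable (fun x => q x * (u x s) ^ 2) volume 0 l :=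
      intX (sliceX (G := fun x τ => q x * (u x τ) ^ 2) c5 hs)
    have i6 : IntervalIntegrable (fun x => 2 * u x s * f x s) volume 0 l :=
      intX (sliceX (G := fun x τ => 2 * u x τ * f x τ) c6 hs)
    rw [e1, intervalIntegral.integral_add (((igd.sub (i2.const_mul 2)).sub (i5.const_mul 2))) i6,
      intervalIntegral.integral_sub (igd.sub (i2.const_mul 2)) (i5.const_mul 2),
      intervalIntegral.integral_sub igd (i2.const_mul 2),
      intervalIntegral.integral_const_mul, intervalIntegral.integral_const_mul, ibp]
    ring
  -- Step C : H s ≤ -(2 * D s) + (E s + F s)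
  have stepC : ∀ s ∈ Icc (0:ℝ) T, H s ≤ -(2 * D s) + (E s + F s) := by
    intro s hs
    have hRR : RR s ≤ E s + F s := by
      have := intervalIntegral.integral_mono_on hl' (intX (sliceX (G := fun x τ => 2 * u x τ * f x τ) c6 hs))
        ((intX (sliceX (G := fun x τ => (u x τ) ^ 2) c4 hs)).add (intX (sliceX (G := fun x τ => (f x τ) ^ 2) c3 hs)))
        (fun x _ => two_mul_le_add_sq (u x s) (f x s))
      calc RR s ≤ ∫ x in (0:ℝ)..l, ((u x s) ^ 2 + (f x s) ^ 2) := this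
        _ = E s + F s := intervalIntegral.integral_add (intX (sliceX (G := fun x τ => (u x τ) ^ 2) c4 hs))
            (intX (sliceX (G := fun x τ => (f x τ) ^ 2) c3 hs))
    have := stepB s hs
    have := Qnn s hs
    linarith
  -- Step D : the basic energy inequality
  have star : ∀ τ ∈ Icc (0:ℝ) T,
      E τ + 2 * ∫ s in (0:ℝ)..τ, D s
        ≤ (∫ x in (0:ℝ)..l, (φ x) ^ 2) + (∫ s in (0:ℝ)..τ, E s) + ∫ s in (0:ℝ)..τ, F s := by
    intro τ hτ
    have hmono : ∫ s in (0:ℝ)..τ, H s ≤ ∫ s in (0:ℝ)..τ, (-(2 * D s) + (E s + F s)) := by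
      have hgc : ContinuousOn (fun s => -(2 * D s) + (E s + F s)) (Icc (0:ℝ) T) :=
        ((continuousOn_const.mul DC).neg).add (EC.add FC)
      apply intervalIntegral.integral_mono_on hτ.1 (intOn HC hτ) (intOn hgc hτ)
      exact fun s hsm => stepC s ⟨hsm.1, hsm.2.trans hτ.2⟩
    have hsplit : ∫ s in (0:ℝ)..τ, (-(2 * D s) + (E s + F s))
        = -(2 * ∫ s in (0:ℝ)..τ, D s) + ((∫ s in (0:ℝ)..τ, E s) + ∫ s in (0:ℝ)..τ, F s) := by
      have iD2 : IntervalIntegrable (fun s => -(2 * D s)) volume 0 τ :=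
        ((intOn DC hτ).const_mul 2).neg
      have iEF : IntervalIntegrable (fun s => E s + F s) volume 0 τ :=
        (intOn EC hτ).add (intOn FC hτ)
      rw [intervalIntegral.integral_add iD2 iEF, intervalIntegral.integral_neg,
        intervalIntegral.integral_const_mul,
        intervalIntegral.integral_add (intOn EC hτ) (intOn FC hτ)]
    have := stepA τ hτ
    rw [hsplit] at hmono
    linarith
  -- Grönwall
  set A : ℝ := (∫ x in (0:ℝ)..l, (φ x) ^ 2) + ∫ s in (0:ℝ)..T, F s with hAdef
  have hE0nn : 0 ≤ ∫ x in (0:ℝ)..l, (φ x) ^ 2 :=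
    intervalIntegral.integral_nonneg hl' (fun x _ => sq_nonneg _)
  have hFTnn : 0 ≤ ∫ s in (0:ℝ)..T, F s :=
    intervalIntegral.integral_nonneg hT' (fun s _ => Fnn s)
  have hAnn : 0 ≤ A := add_nonneg hE0nn hFTnn
  have hTmem : T ∈ Icc (0:ℝ) T := right_mem_Icc.mpr hT'
  have hEle : ∀ τ ∈ Icc (0:ℝ) T, E τ ≤ A + ∫ s in (0:ℝ)..τ, E s := by
    intro τ hτ
    have h1 := star τ hτ
    have h2 : ∫ s in (0:ℝ)..τ, F s ≤ ∫ s in (0:ℝ)..T, F s :=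
      intervalIntegral.integral_mono_interval le_rfl hτ.1 hτ.2
        (Filter.Eventually.of_forall (fun s => Fnn s)) (intOn FC hTmem)
    have h3 : 0 ≤ ∫ s in (0:ℝ)..τ, D s :=
      intervalIntegral.integral_nonneg hτ.1
        (fun s hsm => Dnn s ⟨hsm.1, hsm.2.trans hτ.2⟩)
    rw [hAdef]
    linarith
  have hgron : ∀ τ ∈ Icc (0:ℝ) T, E τ ≤ A * Real.exp T := by
    have gc : ContinuousOn (fun τ => A + ∫ s in (0:ℝ)..τ, E s) (Icc (0:ℝ) T) := by
      apply continuousOn_const.add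
      have h := intervalIntegral.continuousOn_primitive_interval
        (f := E) (a := (0:ℝ)) (b := T) (μ := volume) ?_
      · rwa [uIcc_of_le hT'] at h
      · rw [uIcc_of_le hT']
        exact EC.integrableOn_compact isCompact_Icc
    have gd : ∀ τ ∈ Ico (0:ℝ) T,
        HasDerivWithinAt (fun τ => A + ∫ s in (0:ℝ)..τ, E s) (E τ) (Ici τ) τ := by
      intro τ hτ
      have hτ' : τ ∈ Icc (0:ℝ) T := ⟨hτ.1, hτ.2.le⟩
      have smaf : StronglyMeasurableAtFilter E (nhdsWithin τ (Ioi τ)) volume :=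
        ⟨Icc (0:ℝ) T, Icc_mem_nhdsGT_of_mem ⟨hτ.1, hτ.2⟩,
          EC.aestronglyMeasurable measurableSet_Icc⟩
      have cwa : ContinuousWithinAt E (Ioi τ) τ :=
        (EC τ hτ').mono_of_mem_nhdsWithin (Icc_mem_nhdsGT_of_mem ⟨hτ.1, hτ.2⟩)
      exact (intervalIntegral.integral_hasDerivWithinAt_right (intOn EC hτ') smaf cwa).const_add A
    have gbound : ∀ τ ∈ Ico (0:ℝ) T,
        ‖E τ‖ ≤ 1 * ‖A + ∫ s in (0:ℝ)..τ, E s‖ + 0 := by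
      intro τ hτ
      have hτ' : τ ∈ Icc (0:ℝ) T := ⟨hτ.1, hτ.2.le⟩
      have hgnn : 0 ≤ A + ∫ s in (0:ℝ)..τ, E s :=
        add_nonneg hAnn (intervalIntegral.integral_nonneg hτ.1
          (fun s hsm => Enn s ⟨hsm.1, hsm.2.trans hτ.2.le⟩))
      rw [Real.norm_eq_abs, Real.norm_eq_abs, abs_of_nonneg hgnn, abs_of_nonneg (Enn τ hτ'),
        one_mul, add_zero]
      exact hEle τ hτ'
    have key := norm_le_gronwallBound_of_norm_deriv_right_le (δ := A) (K := 1) (ε := 0) gc gd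
      (by simp [Real.norm_eq_abs, abs_of_nonneg hAnn]) gbound
    intro τ hτ
    have h1 := key τ hτ
    rw [gronwallBound_ε0, sub_zero, one_mul, Real.norm_eq_abs] at h1
    have hgnn : 0 ≤ A + ∫ s in (0:ℝ)..τ, E s :=
      add_nonneg hAnn (intervalIntegral.integral_nonneg hτ.1
        (fun s hsm => Enn s ⟨hsm.1, hsm.2.trans hτ.2⟩))
    have h2 : A + (∫ s in (0:ℝ)..τ, E s) ≤ A * Real.exp τ := by
      rwa [abs_of_nonneg hgnn] at h1
    have h3 : A * Real.exp τ ≤ A * Real.exp T :=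
      mul_le_mul_of_nonneg_left (Real.exp_le_exp.mpr hτ.2) hAnn
    exact le_trans (hEle τ hτ) (le_trans h2 h3)
  -- final assembly
  have hET := hgron t htmem
  have hIntE : (∫ s in (0:ℝ)..T, E s) ≤ A * (T * Real.exp T) := by
    have h := intervalIntegral.integral_mono_on hT' (intOn EC hTmem)
      intervalIntegrable_const (fun s hsm => hgron s hsm)
    simpa using h
  have hstarT := star T hTmem
  have hDTnn : 0 ≤ ∫ s in (0:ℝ)..T, D s :=
    intervalIntegral.integral_nonneg hT' (fun s hsm => Dnn s hsm)
  have hETnn := Enn T hTmem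
  have h2D : 2 * (∫ s in (0:ℝ)..T, D s) ≤ A + T * (A * Real.exp T) := by
    have hA' := hAdef
    linarith
  show E t + (∫ s in (0:ℝ)..T, D s)
      ≤ ((1 + T) * Real.exp T + 1) * A
  nlinarith [hET, h2D, hDTnn, hAnn]
end

section
/- Time-derivative estimate for the regularized non-degenerate problem (estimate (3.5) in proof of Theorem 3.1): Let ε ∈ (0,1) and a_ε(x) = a(x) + ε. Let q : [0,l] → ℝ be continuous with q ≥ 0, f : Q̄ → ℝ continuous, and φ ∈ C¹[0,l] with φ(0) = φ(l) = 0. Let u be continuous on Q̄ = [0,l] × [0,T] with u_t, u_x, u_{xx} and the mixed derivative u_{xt} continuous on Q̄, satisfying u_t − (a_ε(x)u_x)_x + q(x)u = f(x,t) on Q̄, u(0,t) = u(l,t) = 0 for t ∈ [0,T], and u(x,0) = φ(x) for x ∈ [0,l]. Then ∫₀^T∫₀^l |u_t(x,t)|² dx dt ≤ ∫₀^l a_ε(x) φ'(x)² dx + ∫₀^l q(x) φ(x)² dx + ∫₀^T∫₀^l f(x,t)² dx dt. -/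
open Set MeasureTheory intervalIntegral


lemma my_ext2 {l T : ℝ} (hl : 0 ≤ l) (hT : 0 ≤ T) {g : ℝ → ℝ → ℝ}
    (hg : ContinuousOn (fun p : ℝ × ℝ => g p.1 p.2) (Icc 0 l ×ˢ Icc 0 T)) :
    ∃ G : ℝ → ℝ → ℝ, Continuous (fun p : ℝ × ℝ => G p.1 p.2) ∧
      ∀ x ∈ Icc (0:ℝ) l, ∀ t ∈ Icc (0:ℝ) T, G x t = g x t := by
  refine ⟨fun x t => g (min (max x 0) l) (min (max t 0) T), ?_, ?_⟩
  · have hmap : ∀ p : ℝ × ℝ,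
        (min (max p.1 0) l, min (max p.2 0) T) ∈ Icc (0:ℝ) l ×ˢ Icc (0:ℝ) T := by
      intro p
      exact ⟨⟨le_min (le_max_right _ _) hl, min_le_right _ _⟩,
        ⟨le_min (le_max_right _ _) hT, min_le_right _ _⟩⟩
    have hcont : Continuous fun p : ℝ × ℝ => (min (max p.1 0) l, min (max p.2 0) T) := by fun_prop
    have hc : ContinuousOn
        ((fun p : ℝ × ℝ => g p.1 p.2) ∘ fun p : ℝ × ℝ => (min (max p.1 0) l, min (max p.2 0) T))
        univ := hg.comp hcont.continuousOn (fun p _ => hmap p)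
    rw [continuousOn_univ] at hc
    exact hc
  · intro x hx t ht
    simp only []
    rw [max_eq_left hx.1, min_eq_left hx.2, max_eq_left ht.1, min_eq_left ht.2]

lemma my_ftc {c : ℝ} (hc : 0 ≤ c) {g g' : ℝ → ℝ}
    (hder : ∀ x ∈ Icc 0 c, HasDerivWithinAt g (g' x) (Icc 0 c) x)
    (hg' : ContinuousOn g' (Icc 0 c)) :
    ∫ x in (0:ℝ)..c, g' x = g c - g 0 := by
  apply intervalIntegral.integral_eq_sub_of_hasDeriv_right_of_le hc
    (fun x hx => (hder x hx).continuousWithinAt)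
  · intro x hx
    exact (((hder x (Ioo_subset_Icc_self hx)).hasDerivAt
      (Icc_mem_nhds hx.1 hx.2)).hasDerivWithinAt)
  · exact ContinuousOn.intervalIntegrable (by rwa [uIcc_of_le hc])

lemma my_fubini {c d : ℝ} (hc : 0 ≤ c) (hd : 0 ≤ d) {G : ℝ → ℝ → ℝ}
    (hG : Continuous (fun p : ℝ × ℝ => G p.1 p.2)) :
    ∫ t in (0:ℝ)..d, ∫ x in (0:ℝ)..c, G x t = ∫ x in (0:ℝ)..c, ∫ t in (0:ℝ)..d, G x t := by
  simp only [intervalIntegral.integral_of_le hc, intervalIntegral.integral_of_le hd]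
  apply MeasureTheory.integral_integral_swap (f := fun t x => G x t)
    (μ := volume.restrict (Ioc 0 d)) (ν := volume.restrict (Ioc 0 c))
  rw [Measure.prod_restrict]
  have hcomp : IsCompact (Icc (0:ℝ) d ×ˢ Icc (0:ℝ) c) := isCompact_Icc.prod isCompact_Icc
  have h1 : IntegrableOn (Function.uncurry fun t x => G x t) (Icc (0:ℝ) d ×ˢ Icc (0:ℝ) c)
      (volume.prod volume) := by
    apply ContinuousOn.integrableOn_compact hcomp
    exact (hG.comp continuous_swap).continuousOn
  have h2 := h1.mono_set (prod_mono Ioc_subset_Icc_self Ioc_subset_Icc_self)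
  simpa [Measure.volume_eq_prod, IntegrableOn] using h2

lemma my_unique {s : Set ℝ} {x : ℝ} (hs : UniqueDiffWithinAt ℝ s x) {g : ℝ → ℝ} {d1 d2 : ℝ}
    (h1 : HasDerivWithinAt g d1 s x) (h2 : HasDerivWithinAt g d2 s x) : d1 = d2 := by
  rw [← h1.derivWithin hs, ← h2.derivWithin hs]

lemma my_param_cont {c : ℝ} {G : ℝ → ℝ → ℝ}
    (hG : Continuous (fun p : ℝ × ℝ => G p.1 p.2)) :
    Continuous fun t => ∫ x in (0:ℝ)..c, G x t := by
  apply intervalIntegral.continuous_parametric_intervalIntegral_of_continuous'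
    (f := fun t x => G x t) (μ := volume)
  exact hG.comp continuous_swap

/-- Time-derivative estimate (3.5) for the regularized non-degenerate problem (proof of
Theorem 3.1): a classical solution of the regularized initial-boundary value problem with
`φ ∈ C¹[0,l]`, `φ(0) = φ(l) = 0`, satisfies
`∫₀^T∫₀^l u_t² dx dt ≤ ∫₀^l a_ε φ'² dx + ∫₀^l q φ² dx + ∫₀^T∫₀^l f² dx dt`. -/
theorem regularized_time_derivative_estimate
    (l T ε : ℝ) (hl : 0 < l) (hT : 0 < T) (hε : ε ∈ Ioo (0:ℝ) 1)
    (a a' : ℝ → ℝ)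
    (ha : ∀ x ∈ Icc (0:ℝ) l, HasDerivWithinAt a (a' x) (Icc (0:ℝ) l) x)
    (ha'c : ContinuousOn a' (Icc (0:ℝ) l))
    (ha0 : a 0 = 0) (hal : a l = 0)
    (hapos : ∀ x ∈ Ioo (0:ℝ) l, 0 < a x)
    (q : ℝ → ℝ) (hqc : ContinuousOn q (Icc (0:ℝ) l)) (hqn : ∀ x ∈ Icc (0:ℝ) l, 0 ≤ q x)
    (f : ℝ → ℝ → ℝ)
    (hfc : ContinuousOn (fun p : ℝ × ℝ => f p.1 p.2) (Icc (0:ℝ) l ×ˢ Icc (0:ℝ) T))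
    (φ φ' : ℝ → ℝ)
    (hφ : ∀ x ∈ Icc (0:ℝ) l, HasDerivWithinAt φ (φ' x) (Icc (0:ℝ) l) x)
    (hφ'c : ContinuousOn φ' (Icc (0:ℝ) l))
    (hφ0 : φ 0 = 0) (hφl : φ l = 0)
    (u ut ux uxx uxt : ℝ → ℝ → ℝ)
    (hu : ContinuousOn (fun p : ℝ × ℝ => u p.1 p.2) (Icc (0:ℝ) l ×ˢ Icc (0:ℝ) T))
    (hutc : ContinuousOn (fun p : ℝ × ℝ => ut p.1 p.2) (Icc (0:ℝ) l ×ˢ Icc (0:ℝ) T))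
    (huxc : ContinuousOn (fun p : ℝ × ℝ => ux p.1 p.2) (Icc (0:ℝ) l ×ˢ Icc (0:ℝ) T))
    (huxxc : ContinuousOn (fun p : ℝ × ℝ => uxx p.1 p.2) (Icc (0:ℝ) l ×ˢ Icc (0:ℝ) T))
    (huxtc : ContinuousOn (fun p : ℝ × ℝ => uxt p.1 p.2) (Icc (0:ℝ) l ×ˢ Icc (0:ℝ) T))
    (hut : ∀ x ∈ Icc (0:ℝ) l, ∀ t ∈ Icc (0:ℝ) T,
      HasDerivWithinAt (fun τ => u x τ) (ut x t) (Icc (0:ℝ) T) t)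
    (hux : ∀ x ∈ Icc (0:ℝ) l, ∀ t ∈ Icc (0:ℝ) T,
      HasDerivWithinAt (fun s => u s t) (ux x t) (Icc (0:ℝ) l) x)
    (huxx : ∀ x ∈ Icc (0:ℝ) l, ∀ t ∈ Icc (0:ℝ) T,
      HasDerivWithinAt (fun s => ux s t) (uxx x t) (Icc (0:ℝ) l) x)
    (huxt : ∀ x ∈ Icc (0:ℝ) l, ∀ t ∈ Icc (0:ℝ) T,
      HasDerivWithinAt (fun τ => ux x τ) (uxt x t) (Icc (0:ℝ) T) t)
    (hL : ∀ x ∈ Icc (0:ℝ) l, ∀ t ∈ Icc (0:ℝ) T,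
      ut x t - ((a x + ε) * uxx x t + a' x * ux x t) + q x * u x t = f x t)
    (hbc : ∀ t ∈ Icc (0:ℝ) T, u 0 t = 0 ∧ u l t = 0)
    (hinit : ∀ x ∈ Icc (0:ℝ) l, u x 0 = φ x) :
    (∫ t in (0:ℝ)..T, ∫ x in (0:ℝ)..l, (ut x t) ^ 2)
      ≤ (∫ x in (0:ℝ)..l, (a x + ε) * (φ' x) ^ 2) + (∫ x in (0:ℝ)..l, q x * (φ x) ^ 2) +
        ∫ t in (0:ℝ)..T, ∫ x in (0:ℝ)..l, (f x t) ^ 2 := by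
  have hl0 : (0:ℝ) ≤ l := hl.le
  have hT0 : (0:ℝ) ≤ T := hT.le
  have hI : uIcc (0:ℝ) l = Icc 0 l := uIcc_of_le hl0
  have hJ : uIcc (0:ℝ) T = Icc 0 T := uIcc_of_le hT0
  have h0I : (0:ℝ) ∈ Icc (0:ℝ) l := ⟨le_refl _, hl0⟩
  have hlI : l ∈ Icc (0:ℝ) l := ⟨hl0, le_refl _⟩
  have h0J : (0:ℝ) ∈ Icc (0:ℝ) T := ⟨le_refl _, hT0⟩
  have hTJ : T ∈ Icc (0:ℝ) T := ⟨hT0, le_refl _⟩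
  have hudJ : UniqueDiffOn ℝ (Icc (0:ℝ) T) := uniqueDiffOn_Icc hT
  have hudI : UniqueDiffOn ℝ (Icc (0:ℝ) l) := uniqueDiffOn_Icc hl
  -- slices of 2D continuous functions
  have sliceX : ∀ {g : ℝ → ℝ → ℝ},
      ContinuousOn (fun p : ℝ × ℝ => g p.1 p.2) (Icc (0:ℝ) l ×ˢ Icc (0:ℝ) T) →
      ∀ t ∈ Icc (0:ℝ) T, ContinuousOn (fun x => g x t) (Icc (0:ℝ) l) := by
    intro g hg t ht
    exact hg.comp ((continuous_id.prodMk continuous_const).continuousOn)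
      (fun x hx => Set.mk_mem_prod hx ht)
  have sliceT : ∀ {g : ℝ → ℝ → ℝ},
      ContinuousOn (fun p : ℝ × ℝ => g p.1 p.2) (Icc (0:ℝ) l ×ˢ Icc (0:ℝ) T) →
      ∀ x ∈ Icc (0:ℝ) l, ContinuousOn (fun t => g x t) (Icc (0:ℝ) T) := by
    intro g hg x hx
    exact hg.comp ((continuous_const.prodMk continuous_id).continuousOn)
      (fun t ht => Set.mk_mem_prod hx ht)
  have hac : ContinuousOn a (Icc (0:ℝ) l) := fun x hx => (ha x hx).continuousWithinAt
  have hφcont : ContinuousOn φ (Icc (0:ℝ) l) := fun x hx => (hφ x hx).continuousWithinAt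
  have hannn : ∀ x ∈ Icc (0:ℝ) l, 0 ≤ a x := by
    intro x hx
    rcases eq_or_lt_of_le hx.1 with h1 | h1
    · rw [← h1, ha0]
    rcases eq_or_lt_of_le hx.2 with h2 | h2
    · rw [h2, hal]
    · exact (hapos x ⟨h1, h2⟩).le
  -- (A) time derivative vanishes on the lateral boundary
  have hut0 : ∀ t ∈ Icc (0:ℝ) T, ut 0 t = 0 := by
    intro t ht
    refine my_unique (hudJ t ht) (hut 0 h0I t ht) ?_
    exact (hasDerivWithinAt_const t (Icc (0:ℝ) T) (0:ℝ)).congr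
      (fun τ hτ => (hbc τ hτ).1) (hbc t ht).1
  have hutl : ∀ t ∈ Icc (0:ℝ) T, ut l t = 0 := by
    intro t ht
    refine my_unique (hudJ t ht) (hut l hlI t ht) ?_
    exact (hasDerivWithinAt_const t (Icc (0:ℝ) T) (0:ℝ)).congr
      (fun τ hτ => (hbc τ hτ).2) (hbc t ht).2
  -- (B) initial slope
  have hux0 : ∀ x ∈ Icc (0:ℝ) l, ux x 0 = φ' x := by
    intro x hx
    refine my_unique (hudI x hx) (hux x hx 0 h0J) ?_
    exact (hφ x hx).congr (fun y hy => hinit y hy) (hinit x hx)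
  -- extension of uxt
  obtain ⟨Uxt, hUxt, hUxte⟩ := my_ext2 hl0 hT0 huxtc
  -- (C1) FTC in x for u
  have hC1 : ∀ t ∈ Icc (0:ℝ) T, ∀ x ∈ Icc (0:ℝ) l,
      (∫ y in (0:ℝ)..x, ux y t) = u x t - u 0 t := by
    intro t ht x hx
    have hsub : Icc (0:ℝ) x ⊆ Icc (0:ℝ) l := Icc_subset_Icc le_rfl hx.2
    exact my_ftc hx.1
      (fun y hy => (hux y (hsub hy) t ht).mono hsub)
      ((sliceX huxc t ht).mono hsub)
  -- (C3) difference formula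
  have hC3 : ∀ x ∈ Icc (0:ℝ) l, ∀ t ∈ Icc (0:ℝ) T,
      (∫ y in (0:ℝ)..x, ux y t) - (∫ y in (0:ℝ)..x, ux y 0)
        = ∫ s in (0:ℝ)..t, ∫ y in (0:ℝ)..x, Uxt y s := by
    intro x hx t ht
    have hsubI : Icc (0:ℝ) x ⊆ Icc (0:ℝ) l := Icc_subset_Icc le_rfl hx.2
    have hint1 : IntervalIntegrable (fun y => ux y t) volume 0 x := by
      apply ContinuousOn.intervalIntegrable
      rw [uIcc_of_le hx.1]
      exact (sliceX huxc t ht).mono hsubI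
    have hint0 : IntervalIntegrable (fun y => ux y 0) volume 0 x := by
      apply ContinuousOn.intervalIntegrable
      rw [uIcc_of_le hx.1]
      exact (sliceX huxc 0 h0J).mono hsubI
    rw [← intervalIntegral.integral_sub hint1 hint0]
    have hstep : ∀ y ∈ uIcc (0:ℝ) x, ux y t - ux y 0 = ∫ s in (0:ℝ)..t, Uxt y s := by
      intro y hy
      rw [uIcc_of_le hx.1] at hy
      have hyI : y ∈ Icc (0:ℝ) l := hsubI hy
      have hsubJ : Icc (0:ℝ) t ⊆ Icc (0:ℝ) T := Icc_subset_Icc le_rfl ht.2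
      have hder : ∀ s ∈ Icc (0:ℝ) t,
          HasDerivWithinAt (fun s => ux y s) (Uxt y s) (Icc (0:ℝ) t) s := by
        intro s hs
        have h1 := (huxt y hyI s (hsubJ hs)).mono hsubJ
        rwa [← hUxte y hyI s (hsubJ hs)] at h1
      have hcnt : ContinuousOn (fun s => Uxt y s) (Icc (0:ℝ) t) :=
        Continuous.continuousOn (hUxt.comp (continuous_const.prodMk continuous_id))
      rw [my_ftc ht.1 hder hcnt]
    rw [intervalIntegral.integral_congr hstep]
    exact (my_fubini hx.1 ht.1 hUxt).symm
  -- (C5) representation of ut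
  have hC5 : ∀ x ∈ Icc (0:ℝ) l, ∀ t ∈ Icc (0:ℝ) T,
      ut x t - ut 0 t = ∫ y in (0:ℝ)..x, Uxt y t := by
    intro x hx t ht
    have hψ : HasDerivWithinAt (fun τ => u x τ - u 0 τ) (ut x t - ut 0 t) (Icc (0:ℝ) T) t :=
      (hut x hx t ht).sub (hut 0 h0I t ht)
    have hGxc : Continuous fun s => ∫ y in (0:ℝ)..x, Uxt y s := by
      apply intervalIntegral.continuous_parametric_intervalIntegral_of_continuous'
        (f := fun s y => Uxt y s) (μ := volume)
      exact hUxt.comp continuous_swap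
    have hprim : ∀ τ ∈ Icc (0:ℝ) T,
        (u x 0 - u 0 0) + (∫ s in (0:ℝ)..τ, ∫ y in (0:ℝ)..x, Uxt y s) = u x τ - u 0 τ := by
      intro τ hτ
      have e1 := hC1 τ hτ x hx
      have e0 := hC1 0 h0J x hx
      have e3 := hC3 x hx τ hτ
      linarith
    have hψ2 : HasDerivWithinAt
        (fun τ => (u x 0 - u 0 0) + (∫ s in (0:ℝ)..τ, ∫ y in (0:ℝ)..x, Uxt y s))
        (∫ y in (0:ℝ)..x, Uxt y t) (Icc (0:ℝ) T) t :=
      (((hGxc.integral_hasStrictDerivAt 0 t).hasDerivAt).const_add _).hasDerivWithinAt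
    have hψ2' : HasDerivWithinAt (fun τ => u x τ - u 0 τ)
        (∫ y in (0:ℝ)..x, Uxt y t) (Icc (0:ℝ) T) t :=
      hψ2.congr (fun τ hτ => (hprim τ hτ).symm) (hprim t ht).symm
    exact my_unique (hudJ t ht) hψ hψ2'
  -- (C6) x-derivative of ut
  have hutx : ∀ t ∈ Icc (0:ℝ) T, ∀ x ∈ Icc (0:ℝ) l,
      HasDerivWithinAt (fun s => ut s t) (uxt x t) (Icc (0:ℝ) l) x := by
    intro t ht x hx
    have hsl : Continuous fun y => Uxt y t := hUxt.comp (continuous_id.prodMk continuous_const)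
    have h1 : HasDerivWithinAt (fun s => ut 0 t + ∫ y in (0:ℝ)..s, Uxt y t)
        (Uxt x t) (Icc (0:ℝ) l) x :=
      (((hsl.integral_hasStrictDerivAt 0 x).hasDerivAt).const_add _).hasDerivWithinAt
    have h2 : HasDerivWithinAt (fun s => ut s t) (Uxt x t) (Icc (0:ℝ) l) x := by
      refine h1.congr (fun s hs => ?_) ?_
      · have := hC5 s hs t ht; linarith
      · have := hC5 x hx t ht; linarith
    rwa [hUxte x hx t ht] at h2
  -- (D) per-time energy identity
  have hD : ∀ t ∈ Icc (0:ℝ) T,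
      (∫ x in (0:ℝ)..l, ((ut x t) ^ 2 + (a x + ε) * ux x t * uxt x t
        + q x * u x t * ut x t - f x t * ut x t)) = 0 := by
    intro t ht
    set w : ℝ → ℝ := fun x => (a x + ε) * ux x t * ut x t with hw
    set w' : ℝ → ℝ := fun x =>
      ((a x + ε) * uxx x t + a' x * ux x t) * ut x t + (a x + ε) * ux x t * uxt x t with hw'
    have hwder : ∀ x ∈ Icc (0:ℝ) l, HasDerivWithinAt w (w' x) (Icc (0:ℝ) l) x := by
      intro x hx
      have h1 : HasDerivWithinAt (fun s => (a s + ε) * ux s t)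
          (a' x * ux x t + (a x + ε) * uxx x t) (Icc (0:ℝ) l) x :=
        ((ha x hx).add_const ε).mul (huxx x hx t ht)
      have h2 := h1.mul (hutx t ht x hx)
      have h3 : w' x = (a' x * ux x t + (a x + ε) * uxx x t) * ut x t
          + (a x + ε) * ux x t * uxt x t := by rw [hw']; ring
      rw [h3]
      exact h2
    have hw'c : ContinuousOn w' (Icc (0:ℝ) l) := by
      apply ContinuousOn.add
      · exact (((hac.add continuousOn_const).mul (sliceX huxxc t ht)).add
          (ha'c.mul (sliceX huxc t ht))).mul (sliceX hutc t ht)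
      · exact ((hac.add continuousOn_const).mul (sliceX huxc t ht)).mul (sliceX huxtc t ht)
    have hint : (∫ x in (0:ℝ)..l, w' x) = w l - w 0 := my_ftc hl0 hwder hw'c
    have hwz : w l - w 0 = 0 := by
      rw [hw]
      simp only [hut0 t ht, hutl t ht]
      ring
    have hEq : EqOn (fun x => (ut x t) ^ 2 + (a x + ε) * ux x t * uxt x t
        + q x * u x t * ut x t - f x t * ut x t) w' (uIcc (0:ℝ) l) := by
      intro x hx
      rw [hI] at hx
      have hf' := hL x hx t ht
      simp only [hw']
      rw [← hf']
      ring
    rw [intervalIntegral.integral_congr hEq, hint, hwz]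
  -- extensions of the five integrands
  have hafst : ContinuousOn (fun p : ℝ × ℝ => a p.1) (Icc (0:ℝ) l ×ˢ Icc (0:ℝ) T) :=
    hac.comp continuous_fst.continuousOn (fun p hp => hp.1)
  have hqfst : ContinuousOn (fun p : ℝ × ℝ => q p.1) (Icc (0:ℝ) l ×ˢ Icc (0:ℝ) T) :=
    hqc.comp continuous_fst.continuousOn (fun p hp => hp.1)
  obtain ⟨G1, hG1, hG1e⟩ := my_ext2 hl0 hT0 (g := fun x t => (ut x t) ^ 2) (hutc.pow 2)
  obtain ⟨G2, hG2, hG2e⟩ := my_ext2 hl0 hT0 (g := fun x t => (a x + ε) * ux x t * uxt x t)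
    (((hafst.add continuousOn_const).mul huxc).mul huxtc)
  obtain ⟨G3, hG3, hG3e⟩ := my_ext2 hl0 hT0 (g := fun x t => q x * u x t * ut x t)
    ((hqfst.mul hu).mul hutc)
  obtain ⟨G4, hG4, hG4e⟩ := my_ext2 hl0 hT0 (g := fun x t => f x t * ut x t) (hfc.mul hutc)
  obtain ⟨G5, hG5, hG5e⟩ := my_ext2 hl0 hT0 (g := fun x t => (f x t) ^ 2) (hfc.pow 2)
  have gsliceX : ∀ (G : ℝ → ℝ → ℝ), Continuous (fun p : ℝ × ℝ => G p.1 p.2) →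
      ∀ t : ℝ, Continuous fun x => G x t :=
    fun G hG t => hG.comp (continuous_id.prodMk continuous_const)
  -- double congruence
  have congr2 : ∀ (g G : ℝ → ℝ → ℝ), (∀ x ∈ Icc (0:ℝ) l, ∀ t ∈ Icc (0:ℝ) T, G x t = g x t) →
      (∫ t in (0:ℝ)..T, ∫ x in (0:ℝ)..l, g x t)
        = ∫ t in (0:ℝ)..T, ∫ x in (0:ℝ)..l, G x t := by
    intro g G hGg
    apply intervalIntegral.integral_congr
    intro t ht
    rw [hJ] at ht
    apply intervalIntegral.integral_congr
    intro x hx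
    rw [hI] at hx
    exact (hGg x hx t ht).symm
  have e1 : (∫ t in (0:ℝ)..T, ∫ x in (0:ℝ)..l, (ut x t) ^ 2)
      = ∫ t in (0:ℝ)..T, ∫ x in (0:ℝ)..l, G1 x t := congr2 _ G1 hG1e
  have e5 : (∫ t in (0:ℝ)..T, ∫ x in (0:ℝ)..l, (f x t) ^ 2)
      = ∫ t in (0:ℝ)..T, ∫ x in (0:ℝ)..l, G5 x t := congr2 _ G5 hG5e
  -- sum identity with extensions
  have hsum0 : (∫ t in (0:ℝ)..T, ∫ x in (0:ℝ)..l, (G1 x t + G2 x t + G3 x t - G4 x t)) = 0 := by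
    have hEq : EqOn (fun t => ∫ x in (0:ℝ)..l, (G1 x t + G2 x t + G3 x t - G4 x t))
        (fun _ => (0:ℝ)) (uIcc (0:ℝ) T) := by
      intro t ht
      rw [hJ] at ht
      have hinner : (∫ x in (0:ℝ)..l, (G1 x t + G2 x t + G3 x t - G4 x t))
          = ∫ x in (0:ℝ)..l, ((ut x t) ^ 2 + (a x + ε) * ux x t * uxt x t
            + q x * u x t * ut x t - f x t * ut x t) := by
        apply intervalIntegral.integral_congr
        intro x hx
        rw [hI] at hx
        show G1 x t + G2 x t + G3 x t - G4 x t = (ut x t) ^ 2 + (a x + ε) * ux x t * uxt x t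
          + q x * u x t * ut x t - f x t * ut x t
        rw [hG1e x hx t ht, hG2e x hx t ht, hG3e x hx t ht, hG4e x hx t ht]
      exact hinner.trans (hD t ht)
    rw [intervalIntegral.integral_congr hEq, intervalIntegral.integral_zero]
  have hinsplit : ∀ t : ℝ, (∫ x in (0:ℝ)..l, (G1 x t + G2 x t + G3 x t - G4 x t))
      = (∫ x in (0:ℝ)..l, G1 x t) + (∫ x in (0:ℝ)..l, G2 x t)
        + (∫ x in (0:ℝ)..l, G3 x t) - (∫ x in (0:ℝ)..l, G4 x t) := by
    intro t
    have i1 : IntervalIntegrable (fun x => G1 x t) volume 0 l :=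
      (gsliceX G1 hG1 t).intervalIntegrable _ _
    have i2 : IntervalIntegrable (fun x => G2 x t) volume 0 l :=
      (gsliceX G2 hG2 t).intervalIntegrable _ _
    have i3 : IntervalIntegrable (fun x => G3 x t) volume 0 l :=
      (gsliceX G3 hG3 t).intervalIntegrable _ _
    have i4 : IntervalIntegrable (fun x => G4 x t) volume 0 l :=
      (gsliceX G4 hG4 t).intervalIntegrable _ _
    rw [intervalIntegral.integral_sub ((i1.add i2).add i3) i4,
      intervalIntegral.integral_add (i1.add i2) i3, intervalIntegral.integral_add i1 i2]
  have hKsum : (∫ t in (0:ℝ)..T, ∫ x in (0:ℝ)..l, G1 x t)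
      + (∫ t in (0:ℝ)..T, ∫ x in (0:ℝ)..l, G2 x t)
      + (∫ t in (0:ℝ)..T, ∫ x in (0:ℝ)..l, G3 x t)
      - (∫ t in (0:ℝ)..T, ∫ x in (0:ℝ)..l, G4 x t) = 0 := by
    have j1 : IntervalIntegrable (fun t => ∫ x in (0:ℝ)..l, G1 x t) volume 0 T :=
      (my_param_cont hG1).intervalIntegrable _ _
    have j2 : IntervalIntegrable (fun t => ∫ x in (0:ℝ)..l, G2 x t) volume 0 T :=
      (my_param_cont hG2).intervalIntegrable _ _
    have j3 : IntervalIntegrable (fun t => ∫ x in (0:ℝ)..l, G3 x t) volume 0 T :=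
      (my_param_cont hG3).intervalIntegrable _ _
    have j4 : IntervalIntegrable (fun t => ∫ x in (0:ℝ)..l, G4 x t) volume 0 T :=
      (my_param_cont hG4).intervalIntegrable _ _
    have h0 : (∫ t in (0:ℝ)..T, ((∫ x in (0:ℝ)..l, G1 x t) + (∫ x in (0:ℝ)..l, G2 x t)
        + (∫ x in (0:ℝ)..l, G3 x t) - (∫ x in (0:ℝ)..l, G4 x t))) = 0 := by
      rw [← intervalIntegral.integral_congr (fun t _ => hinsplit t)]
      exact hsum0
    rw [← intervalIntegral.integral_add j1 j2, ← intervalIntegral.integral_add (j1.add j2) j3,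
      ← intervalIntegral.integral_sub ((j1.add j2).add j3) j4]
    exact h0
  -- evaluate the G2 double integral
  have hK2 : (∫ t in (0:ℝ)..T, ∫ x in (0:ℝ)..l, G2 x t)
      = (∫ x in (0:ℝ)..l, (a x + ε) * (ux x T) ^ 2) / 2
        - (∫ x in (0:ℝ)..l, (a x + ε) * (φ' x) ^ 2) / 2 := by
    rw [my_fubini hl0 hT0 hG2]
    have hEq : EqOn (fun x => ∫ t in (0:ℝ)..T, G2 x t)
        (fun x => (a x + ε) * (ux x T) ^ 2 / 2 - (a x + ε) * (φ' x) ^ 2 / 2)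
        (uIcc (0:ℝ) l) := by
      intro x hx
      rw [hI] at hx
      have hcg : (∫ t in (0:ℝ)..T, G2 x t)
          = ∫ t in (0:ℝ)..T, (a x + ε) * ux x t * uxt x t := by
        apply intervalIntegral.integral_congr
        intro t ht
        rw [hJ] at ht
        exact hG2e x hx t ht
      have hder : ∀ t ∈ Icc (0:ℝ) T, HasDerivWithinAt
          (fun t => (a x + ε) / 2 * (ux x t * ux x t))
          ((a x + ε) * ux x t * uxt x t) (Icc (0:ℝ) T) t := by
        intro t ht
        have h := ((huxt x hx t ht).mul (huxt x hx t ht)).const_mul ((a x + ε) / 2)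
        have he : (a x + ε) * ux x t * uxt x t
            = (a x + ε) / 2 * (uxt x t * ux x t + ux x t * uxt x t) := by ring
        rw [he]
        exact h
      have hcnt : ContinuousOn (fun t => (a x + ε) * ux x t * uxt x t) (Icc (0:ℝ) T) :=
        (continuousOn_const.mul (sliceT huxc x hx)).mul (sliceT huxtc x hx)
      have hftc := my_ftc hT0 hder hcnt
      show (∫ t in (0:ℝ)..T, G2 x t) = (a x + ε) * (ux x T) ^ 2 / 2 - (a x + ε) * (φ' x) ^ 2 / 2
      rw [hcg, hftc, ← hux0 x hx]
      ring
    rw [intervalIntegral.integral_congr hEq]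
    have iA : IntervalIntegrable (fun x => (a x + ε) * (ux x T) ^ 2 / 2) volume 0 l := by
      apply ContinuousOn.intervalIntegrable
      rw [hI]
      exact (((hac.add continuousOn_const).mul ((sliceX huxc T hTJ).pow 2)).div_const 2)
    have iB : IntervalIntegrable (fun x => (a x + ε) * (φ' x) ^ 2 / 2) volume 0 l := by
      apply ContinuousOn.intervalIntegrable
      rw [hI]
      exact (((hac.add continuousOn_const).mul (hφ'c.pow 2)).div_const 2)
    rw [intervalIntegral.integral_sub iA iB, intervalIntegral.integral_div,
      intervalIntegral.integral_div]
  -- evaluate the G3 double integral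
  have hK3 : (∫ t in (0:ℝ)..T, ∫ x in (0:ℝ)..l, G3 x t)
      = (∫ x in (0:ℝ)..l, q x * (u x T) ^ 2) / 2
        - (∫ x in (0:ℝ)..l, q x * (φ x) ^ 2) / 2 := by
    rw [my_fubini hl0 hT0 hG3]
    have hEq : EqOn (fun x => ∫ t in (0:ℝ)..T, G3 x t)
        (fun x => q x * (u x T) ^ 2 / 2 - q x * (φ x) ^ 2 / 2)
        (uIcc (0:ℝ) l) := by
      intro x hx
      rw [hI] at hx
      have hcg : (∫ t in (0:ℝ)..T, G3 x t) = ∫ t in (0:ℝ)..T, q x * u x t * ut x t := by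
        apply intervalIntegral.integral_congr
        intro t ht
        rw [hJ] at ht
        exact hG3e x hx t ht
      have hder : ∀ t ∈ Icc (0:ℝ) T, HasDerivWithinAt
          (fun t => q x / 2 * (u x t * u x t))
          (q x * u x t * ut x t) (Icc (0:ℝ) T) t := by
        intro t ht
        have h := ((hut x hx t ht).mul (hut x hx t ht)).const_mul (q x / 2)
        have he : q x * u x t * ut x t = q x / 2 * (ut x t * u x t + u x t * ut x t) := by ring
        rw [he]
        exact h
      have hcnt : ContinuousOn (fun t => q x * u x t * ut x t) (Icc (0:ℝ) T) :=
        (continuousOn_const.mul (sliceT hu x hx)).mul (sliceT hutc x hx)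
      have hftc := my_ftc hT0 hder hcnt
      show (∫ t in (0:ℝ)..T, G3 x t) = q x * (u x T) ^ 2 / 2 - q x * (φ x) ^ 2 / 2
      rw [hcg, hftc, ← hinit x hx]
      ring
    rw [intervalIntegral.integral_congr hEq]
    have iA : IntervalIntegrable (fun x => q x * (u x T) ^ 2 / 2) volume 0 l := by
      apply ContinuousOn.intervalIntegrable
      rw [hI]
      exact ((hqc.mul ((sliceX hu T hTJ).pow 2)).div_const 2)
    have iB : IntervalIntegrable (fun x => q x * (φ x) ^ 2 / 2) volume 0 l := by
      apply ContinuousOn.intervalIntegrable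
      rw [hI]
      exact ((hqc.mul (hφcont.pow 2)).div_const 2)
    rw [intervalIntegral.integral_sub iA iB, intervalIntegral.integral_div,
      intervalIntegral.integral_div]
  -- nonnegativity of terminal energies
  have hS2T : 0 ≤ ∫ x in (0:ℝ)..l, (a x + ε) * (ux x T) ^ 2 :=
    intervalIntegral.integral_nonneg hl0
      (fun x hx => mul_nonneg (add_nonneg (hannn x hx) hε.1.le) (sq_nonneg _))
  have hS3T : 0 ≤ ∫ x in (0:ℝ)..l, q x * (u x T) ^ 2 :=
    intervalIntegral.integral_nonneg hl0 (fun x hx => mul_nonneg (hqn x hx) (sq_nonneg _))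
  -- bound on the source term
  have hK4 : (∫ t in (0:ℝ)..T, ∫ x in (0:ℝ)..l, G4 x t)
      ≤ (∫ t in (0:ℝ)..T, ∫ x in (0:ℝ)..l, G5 x t) / 2
        + (∫ t in (0:ℝ)..T, ∫ x in (0:ℝ)..l, G1 x t) / 2 := by
    have hinner : ∀ t ∈ Icc (0:ℝ) T, (∫ x in (0:ℝ)..l, G4 x t)
        ≤ (∫ x in (0:ℝ)..l, G5 x t) / 2 + (∫ x in (0:ℝ)..l, G1 x t) / 2 := by
      intro t ht
      have i4 : IntervalIntegrable (fun x => G4 x t) volume 0 l :=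
        (gsliceX G4 hG4 t).intervalIntegrable _ _
      have i51 : IntervalIntegrable (fun x => G5 x t / 2 + G1 x t / 2) volume 0 l :=
        (((gsliceX G5 hG5 t).div_const 2).add ((gsliceX G1 hG1 t).div_const 2)).intervalIntegrable _ _
      have hmono := intervalIntegral.integral_mono_on hl0 i4 i51 (fun x hx => by
        rw [hG4e x hx t ht, hG5e x hx t ht, hG1e x hx t ht]
        nlinarith [sq_nonneg (f x t - ut x t)])
      have hsplit : (∫ x in (0:ℝ)..l, (G5 x t / 2 + G1 x t / 2))
          = (∫ x in (0:ℝ)..l, G5 x t) / 2 + (∫ x in (0:ℝ)..l, G1 x t) / 2 := by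
        rw [intervalIntegral.integral_add (((gsliceX G5 hG5 t).div_const 2).intervalIntegrable _ _)
          (((gsliceX G1 hG1 t).div_const 2).intervalIntegrable _ _),
          intervalIntegral.integral_div, intervalIntegral.integral_div]
      linarith [hmono, hsplit.le, hsplit.ge]
    have j4 : IntervalIntegrable (fun t => ∫ x in (0:ℝ)..l, G4 x t) volume 0 T :=
      (my_param_cont hG4).intervalIntegrable _ _
    have j51 : IntervalIntegrable
        (fun t => (∫ x in (0:ℝ)..l, G5 x t) / 2 + (∫ x in (0:ℝ)..l, G1 x t) / 2) volume 0 T :=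
      (((my_param_cont hG5).div_const 2).add ((my_param_cont hG1).div_const 2)).intervalIntegrable _ _
    have hmono2 := intervalIntegral.integral_mono_on hT0 j4 j51 hinner
    have hsplit2 : (∫ t in (0:ℝ)..T, ((∫ x in (0:ℝ)..l, G5 x t) / 2
        + (∫ x in (0:ℝ)..l, G1 x t) / 2))
        = (∫ t in (0:ℝ)..T, ∫ x in (0:ℝ)..l, G5 x t) / 2
          + (∫ t in (0:ℝ)..T, ∫ x in (0:ℝ)..l, G1 x t) / 2 := by
      rw [intervalIntegral.integral_add (((my_param_cont hG5).div_const 2).intervalIntegrable _ _)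
        (((my_param_cont hG1).div_const 2).intervalIntegrable _ _),
        intervalIntegral.integral_div, intervalIntegral.integral_div]
    linarith [hmono2, hsplit2.le, hsplit2.ge]
  rw [e1, e5]
  linarith [hKsum, hK2, hK3, hK4, hS2T, hS3T]
end

section
/- Vanishing of the degenerate flux (claim of Remark 3.3): Let a : [0,l] → ℝ be continuously differentiable with a(0) = 0 and a(x) > 0 for all x ∈ (0,l). Let u : (0,l) → ℝ be differentiable with derivative u', and suppose the function x ↦ a(x)·u'(x)² is (Lebesgue) integrable on (0,l). If the limit lim_{x→0⁺} a(x)u'(x) = k exists, then k = 0. -/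
open Set

/-- Vanishing of the degenerate flux (Remark 3.3): if `a ∈ C¹[0,l]` with `a(0) = 0`,
`a > 0` on `(0,l)`, `u` is differentiable on `(0,l)`, `a·u'² ∈ L¹(0,l)`, and
`a(x)u'(x) → k` as `x → 0⁺`, then `k = 0`. -/
theorem degenerate_flux_vanishes
    (l : ℝ) (hl : 0 < l) (a u u' : ℝ → ℝ) (k : ℝ)
    (haC : ContDiffOn ℝ 1 a (Icc (0:ℝ) l))
    (ha0 : a 0 = 0)
    (hapos : ∀ x ∈ Ioo (0:ℝ) l, 0 < a x)
    (hu : ∀ x ∈ Ioo (0:ℝ) l, HasDerivAt u (u' x) x)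
    (hint : MeasureTheory.IntegrableOn (fun x => a x * (u' x) ^ 2) (Ioo (0:ℝ) l))
    (hlim : Filter.Tendsto (fun x => a x * u' x) (nhdsWithin 0 (Ioi (0:ℝ))) (nhds k)) :
    k = 0 := by
  by_contra hk
  -- Step 1: bound a x ≤ M * x on Icc 0 l
  have hdiff : DifferentiableOn ℝ a (Icc (0:ℝ) l) :=
    haC.differentiableOn one_ne_zero
  have hudiff : UniqueDiffOn ℝ (Icc (0:ℝ) l) := uniqueDiffOn_Icc hl
  have hcont : ContinuousOn (derivWithin a (Icc (0:ℝ) l)) (Icc (0:ℝ) l) :=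
    haC.continuousOn_derivWithin hudiff le_rfl
  obtain ⟨C, hC⟩ := (isCompact_Icc).exists_bound_of_continuousOn hcont
  set M : ℝ := max C 1 with hM
  have hM1 : (0:ℝ) < M := lt_of_lt_of_le one_pos (le_max_right _ _)
  have hbound : ∀ x ∈ Icc (0:ℝ) l, a x ≤ M * x := by
    intro x hx
    have h := Convex.norm_image_sub_le_of_norm_derivWithin_le (C := M) hdiff
      (fun y hy => (hC y hy).trans (le_max_left _ _)) (convex_Icc _ _)
      (left_mem_Icc.mpr hl.le) hx
    rw [ha0, sub_zero, sub_zero] at h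
    calc a x ≤ |a x| := le_abs_self _
      _ ≤ M * |x| := h
      _ = M * x := by rw [abs_of_nonneg hx.1]
  -- Step 2: eventually |a x * u' x| > |k|/2
  have habs : Filter.Tendsto (fun x => |a x * u' x|) (nhdsWithin 0 (Ioi (0:ℝ)))
      (nhds |k|) := hlim.abs
  have hev : ∀ᶠ x in nhdsWithin 0 (Ioi (0:ℝ)), |k| / 2 < |a x * u' x| :=
    habs.eventually (eventually_gt_nhds (half_lt_self (abs_pos.mpr hk)))
  obtain ⟨δ₀, hδ₀pos, hδ₀⟩ := mem_nhdsGT_iff_exists_Ioo_subset.mp hev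
  set δ : ℝ := min δ₀ l with hδdef
  have hδpos : 0 < δ := lt_min (mem_Ioi.mp hδ₀pos) hl
  have hδl : δ ≤ l := min_le_right _ _
  -- Step 3: pointwise lower bound on Ioo 0 δ
  have key : ∀ x ∈ Ioo (0:ℝ) δ, k ^ 2 / 4 / M * x⁻¹ ≤ a x * (u' x) ^ 2 := by
    intro x hx
    have hxl : x ∈ Ioo (0:ℝ) l := ⟨hx.1, lt_of_lt_of_le hx.2 hδl⟩
    have hax : 0 < a x := hapos x hxl
    have haMx : a x ≤ M * x := hbound x ⟨hxl.1.le, hxl.2.le⟩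
    have hlow : |k| / 2 < |a x * u' x| :=
      hδ₀ ⟨hx.1, lt_of_lt_of_le hx.2 (min_le_left _ _)⟩
    have hsq : k ^ 2 / 4 ≤ (a x * u' x) ^ 2 := by
      have h1 : (|k| / 2) ^ 2 ≤ |a x * u' x| ^ 2 := by
        apply pow_le_pow_left₀ (by positivity) hlow.le
      rw [sq_abs] at h1
      calc k ^ 2 / 4 = (|k| / 2) ^ 2 := by rw [div_pow, sq_abs]; norm_num
        _ ≤ (a x * u' x) ^ 2 := h1
    have hform : a x * (u' x) ^ 2 = (a x * u' x) ^ 2 / a x := by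
      field_simp
    rw [hform]
    have hMx : 0 < M * x := mul_pos hM1 hx.1
    calc k ^ 2 / 4 / M * x⁻¹ = k ^ 2 / 4 / (M * x) := by
          rw [← div_div]; exact (div_eq_mul_inv _ _).symm
      _ ≤ (a x * u' x) ^ 2 / (M * x) := by gcongr
      _ ≤ (a x * u' x) ^ 2 / a x := by gcongr
  -- Step 4: deduce integrability of c * x⁻¹ on Ioo 0 δ, contradiction
  have hintδ : MeasureTheory.IntegrableOn (fun x => a x * (u' x) ^ 2) (Ioo (0:ℝ) δ) :=
    hint.mono_set (Ioo_subset_Ioo le_rfl hδl)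
  set c : ℝ := k ^ 2 / 4 / M with hc
  have hcpos : 0 < c := by
    have : 0 < k ^ 2 := pow_pos (abs_pos.mpr hk) 2 |>.trans_eq (sq_abs k) |>.trans_le le_rfl
    positivity
  have hginteg : MeasureTheory.IntegrableOn (fun x => c * x⁻¹) (Ioo (0:ℝ) δ) := by
    apply MeasureTheory.Integrable.mono' hintδ
    · exact ((measurable_const.mul (measurable_inv.comp measurable_id))).aestronglyMeasurable
    · rw [MeasureTheory.ae_restrict_iff' measurableSet_Ioo]
      filter_upwards with x hx
      have hx0 : 0 < x := hx.1
      rw [Real.norm_eq_abs, abs_of_nonneg (by positivity)]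
      exact key x hx
  have hxinv : MeasureTheory.IntegrableOn (fun x => x⁻¹) (Ioo (0:ℝ) δ) := by
    have := hginteg.const_mul c⁻¹
    simpa [MeasureTheory.IntegrableOn, ← mul_assoc, inv_mul_cancel₀ hcpos.ne'] using this
  have hII : IntervalIntegrable (fun x => x⁻¹) MeasureTheory.volume 0 δ := by
    rw [intervalIntegrable_iff_integrableOn_Ioo_of_le hδpos.le]
    exact hxinv
  rw [intervalIntegrable_inv_iff] at hII
  rcases hII with h | h
  · exact hδpos.ne' h.symm
  · exact h (left_mem_uIcc)
end

section
/- L² estimate for the first sensitivity equation (Lemma 5.5, classical form): Let q₁ : [0,l] → ℝ be continuous with q₁ ≥ 0, 𝒬 : [0,l] → ℝ bounded, and u₂ : Q̄ → ℝ continuous. Let U be continuous on Q̄ with U_t, U_x, U_{xx} continuous on [0,l] × (0,T], satisfying U_t − (a(x)U_x)_x + q₁(x)U = −𝒬(x)u₂(x,t) for every (x,t) ∈ [0,l] × (0,T], U(x,0) = 0 for every x ∈ [0,l], and U_x bounded on Q. Then there exists a constant C > 0 depending only on T such that max_{0≤t≤T} ∫₀^l U(x,t)² dx ≤ C · (sup_{[0,l]}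 |𝒬|)² · ∫₀^T∫₀^l |u₂(x,t)|² dx dt. -/
open Set MeasureTheory

/-- L² estimate for the first sensitivity equation (Lemma 5.5, classical form): there is a
constant `C > 0` depending only on `T` such that any bounded classical solution `U` of
`U_t − (aUₓ)ₓ + q₁U = −𝒬u₂` with `U(·,0) = 0` and `Uₓ` bounded on `Q` satisfies
`max_{0≤t≤T} ∫₀^l U² dx ≤ C · (sup |𝒬|)² · ∫₀^T∫₀^l u₂² dx dt`. -/
theorem sensitivity_L2_estimate
    (l T : ℝ) (hl : 0 < l) (hT : 0 < T)
    (a a' : ℝ → ℝ)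
    (ha : ∀ x ∈ Icc (0:ℝ) l, HasDerivWithinAt a (a' x) (Icc (0:ℝ) l) x)
    (ha'c : ContinuousOn a' (Icc (0:ℝ) l))
    (ha0 : a 0 = 0) (hal : a l = 0)
    (hapos : ∀ x ∈ Ioo (0:ℝ) l, 0 < a x) :
    ∃ C > 0, ∀ (q₁ Q : ℝ → ℝ) (u₂ U Ut Ux Uxx : ℝ → ℝ → ℝ),
      ContinuousOn q₁ (Icc (0:ℝ) l) → (∀ x ∈ Icc (0:ℝ) l, 0 ≤ q₁ x) →
      (∃ M, ∀ x ∈ Icc (0:ℝ) l, |Q x| ≤ M) →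
      ContinuousOn (fun p : ℝ × ℝ => u₂ p.1 p.2) (Icc (0:ℝ) l ×ˢ Icc (0:ℝ) T) →
      ContinuousOn (fun p : ℝ × ℝ => U p.1 p.2) (Icc (0:ℝ) l ×ˢ Icc (0:ℝ) T) →
      ContinuousOn (fun p : ℝ × ℝ => Ut p.1 p.2) (Icc (0:ℝ) l ×ˢ Ioc (0:ℝ) T) →
      ContinuousOn (fun p : ℝ × ℝ => Ux p.1 p.2) (Icc (0:ℝ) l ×ˢ Ioc (0:ℝ) T) →
      ContinuousOn (fun p : ℝ × ℝ => Uxx p.1 p.2) (Icc (0:ℝ) l ×ˢ Ioc (0:ℝ) T) →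
      (∀ x ∈ Icc (0:ℝ) l, ∀ t ∈ Ioc (0:ℝ) T,
        HasDerivWithinAt (fun τ => U x τ) (Ut x t) (Icc (0:ℝ) T) t) →
      (∀ x ∈ Icc (0:ℝ) l, ∀ t ∈ Ioc (0:ℝ) T,
        HasDerivWithinAt (fun s => U s t) (Ux x t) (Icc (0:ℝ) l) x) →
      (∀ x ∈ Icc (0:ℝ) l, ∀ t ∈ Ioc (0:ℝ) T,
        HasDerivWithinAt (fun s => Ux s t) (Uxx x t) (Icc (0:ℝ) l) x) →
      (∀ x ∈ Icc (0:ℝ) l, ∀ t ∈ Ioc (0:ℝ) T,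
        Ut x t - (a x * Uxx x t + a' x * Ux x t) + q₁ x * U x t = -(Q x * u₂ x t)) →
      (∀ x ∈ Icc (0:ℝ) l, U x 0 = 0) →
      (∃ M, ∀ x ∈ Ioo (0:ℝ) l, ∀ t ∈ Ioc (0:ℝ) T, |Ux x t| ≤ M) →
      ∀ t ∈ Icc (0:ℝ) T,
        (∫ x in (0:ℝ)..l, (U x t) ^ 2)
          ≤ C * (sSup ((fun x => |Q x|) '' Icc (0:ℝ) l)) ^ 2 *
              ∫ s in (0:ℝ)..T, ∫ x in (0:ℝ)..l, (u₂ x s) ^ 2 := by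
  refine ⟨1 + Real.exp T, by positivity, ?_⟩
  intro q₁ Q u₂ U Ut Ux Uxx hq₁c hq₁ hQbdd hu₂c hUc hUtc hUxc hUxxc hUt hUx hUxx hPDE hU0 _
  -- basic facts
  have hac : ContinuousOn a (Icc (0:ℝ) l) := fun x hx => (ha x hx).continuousWithinAt
  have hann : ∀ x ∈ Icc (0:ℝ) l, 0 ≤ a x := by
    intro x hx
    rcases eq_or_lt_of_le hx.1 with h0 | h0
    · rw [← h0]; simp [ha0]
    rcases eq_or_lt_of_le hx.2 with h1 | h1
    · rw [h1]; simp [hal]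
    exact (hapos x ⟨h0, h1⟩).le
  set M := sSup ((fun x => |Q x|) '' Icc (0:ℝ) l) with hMdef
  have hMle : ∀ x ∈ Icc (0:ℝ) l, |Q x| ≤ M := by
    obtain ⟨M₀, hM₀⟩ := hQbdd
    intro x hx
    exact le_csSup ⟨M₀, by rintro y ⟨z, hz, rfl⟩; exact hM₀ z hz⟩ (mem_image_of_mem _ hx)
  have hM0 : 0 ≤ M := le_trans (abs_nonneg _) (hMle 0 ⟨le_rfl, hl.le⟩)
  -- clamps
  set cX : ℝ → ℝ := fun x => max 0 (min x l) with hcXdef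
  set cT : ℝ → ℝ := fun t => max 0 (min t T) with hcTdef
  have hcXc : Continuous cX := continuous_const.max (continuous_id.min continuous_const)
  have hcTc : Continuous cT := continuous_const.max (continuous_id.min continuous_const)
  have hcXm : ∀ x, cX x ∈ Icc (0:ℝ) l :=
    fun x => ⟨le_max_left _ _, max_le hl.le (min_le_right _ _)⟩
  have hcTm : ∀ t, cT t ∈ Icc (0:ℝ) T :=
    fun t => ⟨le_max_left _ _, max_le hT.le (min_le_right _ _)⟩
  have hcXid : ∀ x ∈ Icc (0:ℝ) l, cX x = x := by
    intro x hx; simp [hcXdef, min_eq_left hx.2, max_eq_right hx.1]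
  have hcTid : ∀ t ∈ Icc (0:ℝ) T, cT t = t := by
    intro t ht; simp [hcTdef, min_eq_left ht.2, max_eq_right ht.1]
  -- extensions
  have hUec : Continuous (fun p : ℝ × ℝ => U (cX p.1) (cT p.2)) :=
    hUc.comp_continuous ((hcXc.comp continuous_fst).prodMk (hcTc.comp continuous_snd))
      (fun p => ⟨hcXm _, hcTm _⟩)
  have hu₂ec : Continuous (fun p : ℝ × ℝ => u₂ (cX p.1) (cT p.2)) :=
    hu₂c.comp_continuous ((hcXc.comp continuous_fst).prodMk (hcTc.comp continuous_snd))
      (fun p => ⟨hcXm _, hcTm _⟩)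
  -- energy and source
  set EE : ℝ → ℝ := fun t => ∫ x in (0:ℝ)..l, (U (cX x) (cT t)) ^ 2 with hEEdef
  set g2 : ℝ → ℝ := fun t => ∫ x in (0:ℝ)..l, (u₂ (cX x) (cT t)) ^ 2 with hg2def
  have hEEc : Continuous EE := by
    apply intervalIntegral.continuous_parametric_intervalIntegral_of_continuous
      (μ := volume) (f := fun t x => (U (cX x) (cT t)) ^ 2) ?_ continuous_const
    exact (hUec.comp (continuous_snd.prodMk continuous_fst)).pow 2
  have hg2c : Continuous g2 := by
    apply intervalIntegral.continuous_parametric_intervalIntegral_of_continuous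
      (μ := volume) (f := fun t x => (u₂ (cX x) (cT t)) ^ 2) ?_ continuous_const
    exact (hu₂ec.comp (continuous_snd.prodMk continuous_fst)).pow 2
  have hEEt : ∀ t ∈ Icc (0:ℝ) T, EE t = ∫ x in (0:ℝ)..l, (U x t) ^ 2 := by
    intro t ht
    refine intervalIntegral.integral_congr (fun x hx => ?_)
    rw [uIcc_of_le hl.le] at hx
    rw [hcXid x hx, hcTid t ht]
  have hg2t : ∀ t ∈ Icc (0:ℝ) T, g2 t = ∫ x in (0:ℝ)..l, (u₂ x t) ^ 2 := by
    intro t ht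
    refine intervalIntegral.integral_congr (fun x hx => ?_)
    rw [uIcc_of_le hl.le] at hx
    rw [hcXid x hx, hcTid t ht]
  have hEE0 : EE 0 = 0 := by
    rw [hEEt 0 ⟨le_rfl, hT.le⟩]
    rw [show (∫ x in (0:ℝ)..l, (U x 0) ^ 2) = ∫ x in (0:ℝ)..l, (0:ℝ) from
      intervalIntegral.integral_congr (fun x hx => by
        rw [uIcc_of_le hl.le] at hx; rw [hU0 x hx]; ring)]
    simp
  have hEEnn : ∀ t, 0 ≤ EE t :=
    fun t => intervalIntegral.integral_nonneg hl.le (fun x _ => sq_nonneg _)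
  have hg2nn : ∀ t, 0 ≤ g2 t :=
    fun t => intervalIntegral.integral_nonneg hl.le (fun x _ => sq_nonneg _)
  -- primitive of the source
  set P : ℝ → ℝ := fun t => M ^ 2 * ∫ s in (0:ℝ)..t, g2 s with hPdef
  have hPderiv : ∀ t, HasDerivAt P (M ^ 2 * g2 t) t := by
    intro t
    exact (intervalIntegral.integral_hasDerivAt_right
      (hg2c.intervalIntegrable _ _) (hg2c.stronglyMeasurableAtFilter _ _)
      hg2c.continuousAt).const_mul (M ^ 2)
  have hPc : Continuous P := continuous_iff_continuousAt.2
    (fun t => (hPderiv t).differentiableAt.continuousAt)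
  have hPmono : ∀ t ∈ Icc (0:ℝ) T, P t ≤ P T := by
    intro t ht
    have h1 : (∫ s in (0:ℝ)..t, g2 s) ≤ ∫ s in (0:ℝ)..T, g2 s := by
      rw [← intervalIntegral.integral_add_adjacent_intervals
        (hg2c.intervalIntegrable 0 t) (hg2c.intervalIntegrable t T)]
      have : 0 ≤ ∫ s in t..T, g2 s :=
        intervalIntegral.integral_nonneg ht.2 (fun s _ => hg2nn s)
      linarith
    exact mul_le_mul_of_nonneg_left h1 (sq_nonneg M)
  have hPnn : ∀ t ∈ Icc (0:ℝ) T, 0 ≤ P t := by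
    intro t ht
    exact mul_nonneg (sq_nonneg M)
      (intervalIntegral.integral_nonneg ht.1 (fun s _ => hg2nn s))
  -- derivative of the energy
  set DD : ℝ → ℝ := fun t => ∫ x in (0:ℝ)..l, 2 * U x t * Ut x t with hDDdef
  -- section continuity helper
  have secc : ∀ (F : ℝ → ℝ → ℝ),
      ContinuousOn (fun p : ℝ × ℝ => F p.1 p.2) (Icc (0:ℝ) l ×ˢ Ioc (0:ℝ) T) →
      ∀ t ∈ Ioc (0:ℝ) T, ContinuousOn (fun x => F x t) (Icc (0:ℝ) l) := by
    intro F hF t ht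
    exact hF.comp (continuous_id.prodMk continuous_const).continuousOn
      (fun x hx => ⟨hx, ht⟩)
  have secU : ∀ t ∈ Icc (0:ℝ) T, ContinuousOn (fun x => U x t) (Icc (0:ℝ) l) := by
    intro t ht
    exact hUc.comp (continuous_id.prodMk continuous_const).continuousOn
      (fun x hx => ⟨hx, ht⟩)
  have secu₂ : ∀ t ∈ Icc (0:ℝ) T, ContinuousOn (fun x => u₂ x t) (Icc (0:ℝ) l) := by
    intro t ht
    exact hu₂c.comp (continuous_id.prodMk continuous_const).continuousOn
      (fun x hx => ⟨hx, ht⟩)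
  have hEEderiv : ∀ t ∈ Ioo (0:ℝ) T, HasDerivAt EE (DD t) t := by
    intro t ht
    have hε : (0:ℝ) < min t (T - t) / 2 := by
      have h1 : 0 < t := ht.1
      have h2 : 0 < T - t := by linarith [ht.2]
      positivity
    set ε := min t (T - t) / 2 with hεdef
    have hnear : ∀ τ : ℝ, |τ - t| ≤ ε → τ ∈ Ioc (0:ℝ) T := by
      intro τ hτ
      rw [abs_le] at hτ
      have h1 : ε ≤ t / 2 := by
        rw [hεdef]; have := min_le_left t (T - t); linarith
      have h2 : ε ≤ (T - t) / 2 := by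
        rw [hεdef]; have := min_le_right t (T - t); linarith
      constructor <;> [linarith [ht.1]; linarith [ht.2]]
    have hball : ∀ τ ∈ Metric.ball t ε, τ ∈ Ioc (0:ℝ) T := by
      intro τ hτ
      rw [Metric.mem_ball, Real.dist_eq] at hτ
      exact hnear τ hτ.le
    -- bounds for U and Ut
    obtain ⟨B₁, hB₁⟩ := (isCompact_Icc.prod isCompact_Icc).exists_bound_of_continuousOn hUc
    have hKsub : Icc (0:ℝ) l ×ˢ Icc (t - ε) (t + ε) ⊆ Icc (0:ℝ) l ×ˢ Ioc (0:ℝ) T := by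
      rintro ⟨x, τ⟩ ⟨hx, hτ⟩
      exact ⟨hx, hnear τ (abs_le.2 ⟨by linarith [hτ.1], by linarith [hτ.2]⟩)⟩
    obtain ⟨B₂, hB₂⟩ := (isCompact_Icc.prod isCompact_Icc).exists_bound_of_continuousOn
      (hUtc.mono hKsub)
    have hB₁0 : 0 ≤ B₁ := le_trans (norm_nonneg _) (hB₁ (0, 0) ⟨⟨le_rfl, hl.le⟩, ⟨le_rfl, hT.le⟩⟩)
    have hB₂0 : 0 ≤ B₂ := le_trans (norm_nonneg _)
      (hB₂ (0, t) ⟨⟨le_rfl, hl.le⟩, ⟨by linarith [hε.le], by linarith [hε.le]⟩⟩)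
    -- dominated differentiation under the integral sign
    have key := intervalIntegral.hasDerivAt_integral_of_dominated_loc_of_deriv_le
      (F := fun τ x => (U x τ) ^ 2) (F' := fun τ x => 2 * U x τ * Ut x τ)
      (x₀ := t) (a := (0:ℝ)) (b := l) (μ := volume)
      (bound := fun _ => 2 * B₁ * B₂) (Metric.ball_mem_nhds t hε) ?_ ?_ ?_ ?_ ?_ ?_
    · -- transfer to EE
      refine HasDerivAt.congr_of_eventuallyEq key.2 ?_
      have hball_mem : Metric.ball t ε ∈ nhds t := Metric.ball_mem_nhds t hε
      filter_upwards [hball_mem] with τ hτ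
      exact hEEt τ (Ioc_subset_Icc_self (hball τ hτ))
    · -- measurability of F near t
      filter_upwards [Metric.ball_mem_nhds t hε] with τ hτ
      apply ContinuousOn.aestronglyMeasurable _ measurableSet_uIoc
      rw [uIoc_of_le hl.le]
      exact ((secU τ (Ioc_subset_Icc_self (hball τ hτ))).mono Ioc_subset_Icc_self).pow 2
    · -- integrability of F t
      exact (((secU t (Ioc_subset_Icc_self ⟨ht.1, ht.2.le⟩)).pow 2).intervalIntegrable_of_Icc hl.le)
    · -- measurability of F' t
      apply ContinuousOn.aestronglyMeasurable _ measurableSet_uIoc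
      rw [uIoc_of_le hl.le]
      have h1 := (secU t (Ioc_subset_Icc_self ⟨ht.1, ht.2.le⟩)).mono (Ioc_subset_Icc_self (a := (0:ℝ)) (b := l))
      have h2 := (secc Ut hUtc t ⟨ht.1, ht.2.le⟩).mono (Ioc_subset_Icc_self (a := (0:ℝ)) (b := l))
      exact (continuousOn_const.mul h1).mul h2
    · -- uniform bound on F'
      refine Filter.Eventually.of_forall (fun x hx τ hτ => ?_)
      have hxI : x ∈ Icc (0:ℝ) l := Ioc_subset_Icc_self (by rwa [uIoc_of_le hl.le] at hx)
      have hτI := hball τ hτ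
      have e1 : ‖U x τ‖ ≤ B₁ := hB₁ (x, τ) ⟨hxI, Ioc_subset_Icc_self hτI⟩
      have e2 : ‖Ut x τ‖ ≤ B₂ := by
        refine hB₂ (x, τ) ⟨hxI, ?_⟩
        rw [Metric.mem_ball, Real.dist_eq, abs_lt] at hτ
        exact ⟨by linarith [hτ.1], by linarith [hτ.2]⟩
      rw [Real.norm_eq_abs] at e1 e2 ⊢
      rw [abs_mul, abs_mul, abs_two]
      have h3 := mul_le_mul e1 e2 (abs_nonneg _) hB₁0
      show 2 * |U x τ| * |Ut x τ| ≤ 2 * B₁ * B₂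
      linarith
    · exact intervalIntegrable_const
    · -- differentiability in τ
      refine Filter.Eventually.of_forall (fun x hx τ hτ => ?_)
      have hxI : x ∈ Icc (0:ℝ) l := Ioc_subset_Icc_self (by rwa [uIoc_of_le hl.le] at hx)
      have hτI := hball τ hτ
      have hd : HasDerivAt (fun τ' => U x τ') (Ut x τ) τ :=
        (hUt x hxI τ hτI).hasDerivAt (Icc_mem_nhds (hball τ hτ).1
          (lt_of_lt_of_le (by
            rw [Metric.mem_ball, Real.dist_eq, abs_lt] at hτ
            have h2 : ε ≤ (T - t) / 2 := by
              rw [hεdef]; have := min_le_right t (T - t); linarith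
            linarith [hτ.2, ht.2] : τ < T) le_rfl))
      have : HasDerivAt (fun τ' => U x τ' ^ 2) _ τ := hd.pow 2
      exact this.congr_deriv (by norm_num)
  -- energy inequality
  have hDDle : ∀ t ∈ Ioo (0:ℝ) T, DD t ≤ EE t + M ^ 2 * g2 t := by
    intro t ht
    have htI : t ∈ Ioc (0:ℝ) T := ⟨ht.1, ht.2.le⟩
    have htIcc : t ∈ Icc (0:ℝ) T := ⟨ht.1.le, ht.2.le⟩
    have cU := secU t htIcc
    have cu := secu₂ t htIcc
    have cUx := secc Ux hUxc t htI
    have cUxx := secc Uxx hUxxc t htI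
    -- integration by parts term
    set g : ℝ → ℝ := fun s => 2 * (a s * Ux s t * U s t) with hgdef
    set g' : ℝ → ℝ := fun s =>
      2 * ((a' s * Ux s t + a s * Uxx s t) * U s t + a s * Ux s t * Ux s t) with hg'def
    have hgderiv : ∀ x ∈ Icc (0:ℝ) l, HasDerivWithinAt g (g' x) (Icc (0:ℝ) l) x := by
      intro x hx
      exact (((ha x hx).mul (hUxx x hx t htI)).mul (hUx x hx t htI)).const_mul 2
    have hg'c : ContinuousOn g' (Icc (0:ℝ) l) :=
      (continuousOn_const.mul
        (((ha'c.mul cUx).add (hac.mul cUxx)).mul cU |>.add ((hac.mul cUx).mul cUx)))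
    have hgc : ContinuousOn g (Icc (0:ℝ) l) :=
      continuousOn_const.mul ((hac.mul cUx).mul cU)
    have hFTC : (∫ x in (0:ℝ)..l, g' x) = g l - g 0 := by
      apply intervalIntegral.integral_eq_sub_of_hasDeriv_right_of_le hl.le hgc
      · intro x hx
        exact ((hgderiv x ⟨hx.1.le, hx.2.le⟩).hasDerivAt
          (Icc_mem_nhds hx.1 hx.2)).hasDerivWithinAt
      · exact hg'c.intervalIntegrable_of_Icc hl.le
    have hg0 : g l - g 0 = 0 := by simp [hgdef, ha0, hal]
    -- remainder
    set r : ℝ → ℝ := fun x => 2 * U x t * Ut x t - g' x with hrdef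
    have hUtsec := secc Ut hUtc t htI
    have h2UUtc : ContinuousOn (fun x => 2 * U x t * Ut x t) (Icc (0:ℝ) l) :=
      (continuousOn_const.mul cU).mul hUtsec
    have hrc : ContinuousOn r (Icc (0:ℝ) l) := h2UUtc.sub hg'c
    have hsplit : DD t = (∫ x in (0:ℝ)..l, g' x) + ∫ x in (0:ℝ)..l, r x := by
      rw [hDDdef]
      rw [← intervalIntegral.integral_add (hg'c.intervalIntegrable_of_Icc hl.le)
        (hrc.intervalIntegrable_of_Icc hl.le)]
      refine intervalIntegral.integral_congr (fun x hx => ?_)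
      simp only [hrdef]
      ring
    have hrle : ∀ x ∈ Icc (0:ℝ) l, r x ≤ U x t ^ 2 + M ^ 2 * u₂ x t ^ 2 := by
      intro x hx
      have hpde := hPDE x hx t htI
      have hUt_eq : Ut x t = a x * Uxx x t + a' x * Ux x t - q₁ x * U x t - Q x * u₂ x t := by
        linarith
      have hr_eq : r x = -(2 * a x * Ux x t ^ 2) - 2 * q₁ x * U x t ^ 2
          - 2 * Q x * U x t * u₂ x t := by
        simp only [hrdef, hg'def, hUt_eq]; ring
      rw [hr_eq]
      have h1 : 0 ≤ a x * Ux x t ^ 2 := mul_nonneg (hann x hx) (sq_nonneg _)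
      have h2 : 0 ≤ q₁ x * U x t ^ 2 := mul_nonneg (hq₁ x hx) (sq_nonneg _)
      have h3 : Q x ^ 2 ≤ M ^ 2 := by
        rw [← sq_abs]
        exact pow_le_pow_left₀ (abs_nonneg _) (hMle x hx) 2
      nlinarith [sq_nonneg (U x t + Q x * u₂ x t),
        mul_nonneg (sub_nonneg.2 h3) (sq_nonneg (u₂ x t))]
    have hmono : (∫ x in (0:ℝ)..l, r x)
        ≤ ∫ x in (0:ℝ)..l, (U x t ^ 2 + M ^ 2 * u₂ x t ^ 2) := by
      apply intervalIntegral.integral_mono_on hl.le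
        (hrc.intervalIntegrable_of_Icc hl.le)
        (((cU.pow 2).add (continuousOn_const.mul (cu.pow 2))).intervalIntegrable_of_Icc hl.le)
        hrle
    have hsum : (∫ x in (0:ℝ)..l, (U x t ^ 2 + M ^ 2 * u₂ x t ^ 2))
        = EE t + M ^ 2 * g2 t := by
      rw [intervalIntegral.integral_add (f := fun x => U x t ^ 2) (g := fun x => M ^ 2 * u₂ x t ^ 2) ((cU.pow 2).intervalIntegrable_of_Icc hl.le)
        ((continuousOn_const.mul (cu.pow 2)).intervalIntegrable_of_Icc hl.le),
        intervalIntegral.integral_const_mul, hEEt t htIcc, hg2t t htIcc]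
    calc DD t = (∫ x in (0:ℝ)..l, g' x) + ∫ x in (0:ℝ)..l, r x := hsplit
      _ = 0 + ∫ x in (0:ℝ)..l, r x := by rw [hFTC, hg0]
      _ ≤ 0 + ∫ x in (0:ℝ)..l, (U x t ^ 2 + M ^ 2 * u₂ x t ^ 2) := by linarith [hmono]
      _ = EE t + M ^ 2 * g2 t := by rw [hsum]; ring
  -- conclusion
  intro t ht
  have hRHSeq : P T = M ^ 2 * ∫ s in (0:ℝ)..T, ∫ x in (0:ℝ)..l, (u₂ x s) ^ 2 := by
    have h1 : (∫ s in (0:ℝ)..T, g2 s) = ∫ s in (0:ℝ)..T, ∫ x in (0:ℝ)..l, (u₂ x s) ^ 2 := by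
      refine intervalIntegral.integral_congr (fun s hs => ?_)
      rw [uIcc_of_le hT.le] at hs
      exact hg2t s hs
    simp only [hPdef]
    rw [h1]
  rcases eq_or_lt_of_le ht.1 with h0 | h0
  · -- t = 0
    have hL : (∫ x in (0:ℝ)..l, (U x t) ^ 2) = 0 := by
      rw [← hEEt t ht, ← h0, hEE0]
    rw [hL]
    have hI : 0 ≤ ∫ s in (0:ℝ)..T, ∫ x in (0:ℝ)..l, (u₂ x s) ^ 2 := by
      apply intervalIntegral.integral_nonneg hT.le
      intro s hs
      rw [← hg2t s hs]
      exact hg2nn s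
    positivity
  · -- t > 0
    rw [← hEEt t ht]
    have key : ∀ δ > 0, EE t ≤ P T * (1 + Real.exp T) + δ := by
      intro δ hδ
      -- choose a small starting time s₀
      have htend : Filter.Tendsto EE (nhdsWithin 0 (Ioi (0:ℝ))) (nhds 0) := by
        have h00 : Filter.Tendsto EE (nhds 0) (nhds (EE 0)) := hEEc.continuousAt.tendsto
        rw [hEE0] at h00
        exact h00.mono_left nhdsWithin_le_nhds
      have hev : ∀ᶠ s in nhdsWithin 0 (Ioi (0:ℝ)),
          EE s < δ / Real.exp T ∧ s ∈ Ioi (0:ℝ) ∧ s < t := by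
        have h1 : ∀ᶠ s in nhdsWithin 0 (Ioi (0:ℝ)), EE s < δ / Real.exp T :=
          htend.eventually_lt_const (by positivity)
        have h2 : ∀ᶠ s in nhdsWithin 0 (Ioi (0:ℝ)), s ∈ Ioi (0:ℝ) :=
          self_mem_nhdsWithin
        have h3 : ∀ᶠ s in nhdsWithin 0 (Ioi (0:ℝ)), s < t :=
          Filter.Eventually.filter_mono nhdsWithin_le_nhds
            (Filter.Tendsto.eventually_lt_const h0 Filter.tendsto_id)
        filter_upwards [h1, h2, h3] with s hs1 hs2 hs3; exact ⟨hs1, hs2, hs3⟩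
      obtain ⟨s₀, hs₀δ, hs₀pos, hs₀t⟩ := hev.exists
      -- Grönwall on [s₀, t]
      have hIco : ∀ τ ∈ Ico s₀ t, τ ∈ Ioo (0:ℝ) T := by
        intro τ hτ
        exact ⟨lt_of_lt_of_le hs₀pos hτ.1, lt_of_lt_of_le hτ.2 ht.2⟩
      have hgron := le_gronwallBound_of_liminf_deriv_right_le
        (f := fun τ => EE τ - P τ) (f' := fun τ => DD τ - M ^ 2 * g2 τ)
        (δ := EE s₀ - P s₀) (K := 1) (ε := P T) (a := s₀) (b := t)
        ((hEEc.sub hPc).continuousOn)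
        (fun τ hτ rr hrr => (((hEEderiv τ (hIco τ hτ)).sub
          (hPderiv τ)).hasDerivWithinAt.mono (fun y hy => hy)).liminf_right_slope_le hrr)
        le_rfl
        (fun τ hτ => by
          have h1 := hDDle τ (hIco τ hτ)
          have h2 := hPmono τ ⟨(hIco τ hτ).1.le, (hIco τ hτ).2.le⟩
          simp only [one_mul]
          linarith)
      have hend := hgron t ⟨hs₀t.le, le_rfl⟩
      rw [gronwallBound_of_K_ne_0 one_ne_zero] at hend
      simp only [one_mul, div_one] at hend
      -- estimate the bound
      have hs0' : (0:ℝ) < s₀ := hs₀pos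
      have hts : t - s₀ ≤ T := by linarith [ht.2]
      have hexp : Real.exp (t - s₀) ≤ Real.exp T := Real.exp_le_exp.2 hts
      have hPs₀ : 0 ≤ P s₀ := hPnn s₀ ⟨hs0'.le, by linarith [ht.2]⟩
      have hPT0 : 0 ≤ P T := hPnn T ⟨hT.le, le_rfl⟩
      have hterm1 : (EE s₀ - P s₀) * Real.exp (t - s₀) ≤ δ := by
        calc (EE s₀ - P s₀) * Real.exp (t - s₀) ≤ EE s₀ * Real.exp (t - s₀) := by
              apply mul_le_mul_of_nonneg_right (by linarith) (Real.exp_pos _).le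
          _ ≤ EE s₀ * Real.exp T := mul_le_mul_of_nonneg_left hexp (hEEnn s₀)
          _ ≤ (δ / Real.exp T) * Real.exp T :=
              mul_le_mul_of_nonneg_right hs₀δ.le (Real.exp_pos _).le
          _ = δ := div_mul_cancel₀ δ (Real.exp_pos T).ne'
      have hterm2 : P T * (Real.exp (t - s₀) - 1) ≤ P T * Real.exp T := by
        apply mul_le_mul_of_nonneg_left (by linarith) hPT0
      have hPt : P t ≤ P T := hPmono t ht
      linarith
    have hfin : EE t ≤ P T * (1 + Real.exp T) := le_of_forall_pos_le_add key
    rw [hRHSeq] at hfin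
    calc EE t ≤ M ^ 2 * (∫ s in (0:ℝ)..T, ∫ x in (0:ℝ)..l, (u₂ x s) ^ 2) * (1 + Real.exp T) :=
          hfin
      _ = (1 + Real.exp T) * M ^ 2 * ∫ s in (0:ℝ)..T, ∫ x in (0:ℝ)..l, (u₂ x s) ^ 2 := by ring
end
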